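/- arXiv:1907.05087 — 7 statements merged into one kernel-verified Lean document; each statement's English description precedes it below -/
import Mathlib

section
/- For every integer k ≥ 1 there exist a natural number T with 1 ≤ T ≤ 3·2^{k−1} − k + 1 and a sequence X₁, …, X_T of invertible matrices in GL(k, F₂) such that X_T = I and, for every row index p ∈ {1, …, k} and every nonzero vector v ∈ F₂^k, there exists t ∈ {1, …, T} with row p of X_t equal to v. (Such a sequence is called a row-traversal sequence.) -/
open Matrix

theorem row_traversal_sequence_exists (k : ℕ) (hk : 1 ≤ k) :
    ∃ T : ℕ, 1 ≤ T ∧ T ≤ 3 * 2 ^ (k - 1) - k + 1 ∧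
    ∃ X : ℕ → Matrix (Fin k) (Fin k) (ZMod 2),
      (∀ t : ℕ, 1 ≤ t → t ≤ T → IsUnit (X t)) ∧
      X T = 1 ∧
      ∀ (p : Fin k) (v : Fin k → ZMod 2), v ≠ 0 →
        ∃ t : ℕ, 1 ≤ t ∧ t ≤ T ∧ X t p = v := by
  haveI := Fact.mk Nat.prime_two
  have hk0 : k ≠ 0 := by omega
  set F := GaloisField 2 k with hF
  classical
  set N := 2 ^ k - 1 with hNdef
  have hcard : Nat.card F = 2 ^ k := GaloisField.card 2 k hk0
  have hcardu : Nat.card Fˣ = N := by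
    rw [Nat.card_units, hcard]
  obtain ⟨g, hg⟩ := IsCyclic.exists_generator (α := Fˣ)
  have hgN : g ^ N = 1 := by rw [← hcardu]; exact pow_card_eq_one'
  have hfr : Module.finrank (ZMod 2) F = k := GaloisField.finrank 2 hk0
  let b : Module.Basis (Fin k) (ZMod 2) F :=
    (Module.finBasis (ZMod 2) F).reindex (finCongr hfr)
  let X : ℕ → Matrix (Fin k) (Fin k) (ZMod 2) :=
    fun t => (LinearMap.toMatrixAlgEquiv b
      (Algebra.lmul (ZMod 2) F ((g : F) ^ t)))ᵀ
  have hpow2 : 2 ^ k = 2 * 2 ^ (k - 1) := by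
    conv_lhs => rw [show k = (k - 1) + 1 by omega]
    ring
  have hklt : k - 1 < 2 ^ (k - 1) := Nat.lt_two_pow_self
  refine ⟨N, by omega, by omega, X, ?_, ?_, ?_⟩
  · intro t _ _
    have hu : IsUnit ((g : F) ^ t) := by
      rw [← Units.val_pow_eq_pow_val]; exact Units.isUnit _
    have h2 : IsUnit (Algebra.lmul (ZMod 2) F ((g : F) ^ t)) := hu.map _
    have h3 := h2.map (LinearMap.toMatrixAlgEquiv b)
    rw [Matrix.isUnit_iff_isUnit_det, Matrix.det_transpose,
      ← Matrix.isUnit_iff_isUnit_det]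
    exact h3
  · have h1 : (g : F) ^ N = 1 := by
      rw [← Units.val_pow_eq_pow_val, hgN, Units.val_one]
    show (LinearMap.toMatrixAlgEquiv b (Algebra.lmul (ZMod 2) F ((g : F) ^ N)))ᵀ = 1
    rw [h1, _root_.map_one, _root_.map_one, Matrix.transpose_one]
  · intro p v hv
    set y : F := b.equivFun.symm v with hy
    have hy0 : y ≠ 0 := by
      intro h
      apply hv
      rw [← LinearEquiv.apply_symm_apply b.equivFun v, ← hy, h, map_zero]
    have hbp : b p ≠ 0 := b.ne_zero p
    set u : Fˣ := Units.mk0 (y * (b p)⁻¹) (mul_ne_zero hy0 (inv_ne_zero hbp)) with hu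
    obtain ⟨m, hm'⟩ : u ∈ Submonoid.powers g := mem_powers_iff_mem_zpowers.2 (hg u)
    have hm : g ^ m = u := hm'
    have hN1 : 1 ≤ N := by omega
    have hNpos : 0 < N := hN1
    have key : g ^ (m % N) = g ^ m := by
      conv_rhs => rw [← Nat.div_add_mod m N]
      rw [pow_add, pow_mul, hgN, one_pow, one_mul]
    set t : ℕ := if m % N = 0 then N else m % N with ht
    have hgt : g ^ t = u := by
      rw [ht]
      split_ifs with h0
      · rw [hgN, ← hm, ← key, h0, pow_zero]
      · rw [key, hm]
    refine ⟨t, ?_, ?_, ?_⟩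
    · rw [ht]; split_ifs with h0
      · omega
      · omega
    · rw [ht]; split_ifs with h0
      · omega
      · have := Nat.mod_lt m hNpos; omega
    · have hval : (g : F) ^ t = y * (b p)⁻¹ := by
        rw [← Units.val_pow_eq_pow_val, hgt, hu, Units.val_mk0]
      funext i
      show (LinearMap.toMatrixAlgEquiv b (Algebra.lmul (ZMod 2) F ((g : F) ^ t)))ᵀ p i = v i
      rw [Matrix.transpose_apply, LinearMap.toMatrixAlgEquiv_apply]
      have : (Algebra.lmul (ZMod 2) F ((g : F) ^ t)) (b p) = y := by
        simp only [Algebra.lmul, AlgHom.coe_mk]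
        show (g : F) ^ t * b p = y
        rw [hval, mul_assoc, inv_mul_cancel₀ hbp, mul_one]
      rw [this]
      have h1 : (b.repr y) i = b.equivFun y i := (congrFun (b.equivFun_apply y) i).symm
      have h2 : b.equivFun y = v := by rw [hy]; exact b.equivFun.apply_symm_apply v
      rw [h1, h2]
end

section
/- There exists a constant C > 0 such that for every integer m ≥ 1 the following holds with n = 4^m (so that √n = 2^m and (1/2)·log₂ n = m). For every natural number t with 1 ≤ t ≤ m·2^m and every matrix Y ∈ F₂^{2^m × m} having at most t nonzero entries, there exist a matrix E ∈ F₂^{2^m × t}, a natural number d ≤ C · m, and parallel row-elimination matrices R₁, …, R_d of size (m + 2^m + t) × (m + 2^m + t) such that R_d ⋯ R₂R₁ equals the block matrix with block rows [I_m, 0, 0], [Y, I_{2^m}, E], [0, 0, I_t] (blocks of sizes m, 2^m, t). -/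
open Matrix

/-- A parallel row-elimination matrix over `F₂`: either the identity, or
`I + Σ_k E_{j_k, i_k}` where the `2t` indices `i_1, j_1, …, i_t, j_t` are pairwise distinct. -/
def IsParallelRowElim {ι : Type} [DecidableEq ι] (R : Matrix ι ι (ZMod 2)) : Prop :=
  R = 1 ∨ ∃ (t : ℕ) (i j : Fin t → ι),
    Function.Injective (Sum.elim i j) ∧
    R = 1 + ∑ k : Fin t, Matrix.single (j k) (i k) 1


namespace CnotSparse

section Generic

set_option linter.unusedSectionVars false
variable {ι : Type} [DecidableEq ι] [Fintype ι]

/-- A single-row matrix: row `x` equals `v`, other rows zero. -/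
def rowM (x : ι) (v : ι → ZMod 2) : Matrix ι ι (ZMod 2) := fun a b => if a = x then v b else 0

lemma rowM_sum {A : Type} [DecidableEq A] (s : Finset A) (f : A → ι) (v : A → ι → ZMod 2)
    (x b : ι) :
    (∑ a ∈ s, rowM (f a) (v a)) x b = ∑ a ∈ s.filter (fun a => x = f a), v a b := by
  rw [Matrix.sum_apply, Finset.sum_filter]
  rfl

/-- A layer of simultaneous row additions indexed by a finite type. -/
def elim {A : Type} [Fintype A] (tgt src : A → ι) : Matrix ι ι (ZMod 2) :=
  1 + ∑ a : A, single (tgt a) (src a) 1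

lemma elim_mul_apply_tgt {A : Type} [Fintype A] [DecidableEq A] {tgt src : A → ι}
    (hinj : Function.Injective tgt) (a : A) (M : Matrix ι ι (ZMod 2)) (b : ι) :
    (elim tgt src * M) (tgt a) b = M (tgt a) b + M (src a) b := by
  rw [elim, add_mul, one_mul, Matrix.add_apply, Finset.sum_mul, Matrix.sum_apply]
  congr 1
  rw [Finset.sum_eq_single a]
  · simp
  · intro a' _ ha'
    apply Matrix.single_mul_apply_of_ne
    exact fun h => ha' (hinj h).symm
  · simp

lemma elim_mul_apply_of_ne {A : Type} [Fintype A] {tgt src : A → ι}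
    {x : ι} (hx : ∀ a, tgt a ≠ x) (M : Matrix ι ι (ZMod 2)) (b : ι) :
    (elim tgt src * M) x b = M x b := by
  rw [elim, add_mul, one_mul, Matrix.add_apply, Finset.sum_mul, Matrix.sum_apply]
  rw [Finset.sum_eq_zero, add_zero]
  intro a _
  apply Matrix.single_mul_apply_of_ne
  exact Ne.symm (hx a)

lemma elim_isParallel {A : Type} [Fintype A] [DecidableEq A] (tgt src : A → ι)
    (h : Function.Injective (Sum.elim src tgt)) : IsParallelRowElim (elim tgt src) := by
  right
  classical
  let e := (Fintype.equivFin A).symm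
  refine ⟨Fintype.card A, src ∘ e, tgt ∘ e, ?_, ?_⟩
  · have : Sum.elim (src ∘ e) (tgt ∘ e) = Sum.elim src tgt ∘ Sum.map e e := by
      funext s; cases s <;> rfl
    rw [this]
    exact h.comp (Sum.map_injective.mpr ⟨e.injective, e.injective⟩)
  · rw [elim]
    congr 1
    exact (Equiv.sum_comp e fun a => single (tgt a) (src a) 1).symm

end Generic

section Construction

variable {m t : ℕ}

/-- index type -/
abbrev Idx (m t : ℕ) : Type := Fin m ⊕ (Fin (2 ^ m) ⊕ Fin t)

variable (Y : Matrix (Fin (2 ^ m)) (Fin m) (ZMod 2))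

def colset (c : Fin m) : Finset (Fin (2 ^ m)) := Finset.univ.filter (fun j => Y j c ≠ 0)

def nc (c : Fin m) : ℕ := (colset Y c).card

/-- nodes: entries of `Y`, addressed by column and rank within the column -/
def Node : Type := Σ c : Fin m, Fin (nc Y c)

instance : Fintype (Node Y) := by unfold Node; infer_instance
instance : DecidableEq (Node Y) := by unfold Node; exact Sigma.instDecidableEqSigma

def jof (n : Node Y) : Fin (2 ^ m) := ((colset Y n.1).orderIsoOfFin rfl n.2 : Fin (2 ^ m))

lemma jof_prop (n : Node Y) : Y (jof Y n) n.1 ≠ 0 := by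
  have h := ((colset Y n.1).orderIsoOfFin rfl n.2).2
  simp only [colset, Finset.mem_filter] at h
  exact h.2

lemma jof_inj {c : Fin m} {r r' : Fin (nc Y c)} (h : jof Y ⟨c, r⟩ = jof Y ⟨c, r'⟩) : r = r' := by
  unfold jof at h
  exact ((colset Y c).orderIsoOfFin rfl).injective (Subtype.ext h)

lemma exists_rank {j : Fin (2 ^ m)} {c : Fin m} (h : Y j c ≠ 0) :
    ∃ r : Fin (nc Y c), jof Y ⟨c, r⟩ = j := by
  have hj : j ∈ colset Y c := by simp [colset, h]
  refine ⟨((colset Y c).orderIsoOfFin rfl).symm ⟨j, hj⟩, ?_⟩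
  simp [jof]

lemma nc_le (c : Fin m) : nc Y c ≤ 2 ^ m := by
  have := Finset.card_filter_le (Finset.univ : Finset (Fin (2 ^ m))) (fun j => Y j c ≠ 0)
  simpa [nc, colset] using this

variable (κ : Node Y ↪ Fin t) (k0 : Fin t)

/-- total version of the ancilla assignment -/
def κ' (c : Fin m) (q : ℕ) : Fin t :=
  if h : q < nc Y c then κ ⟨c, ⟨q, h⟩⟩ else k0

def parent (q : ℕ) : ℕ := q - 2 ^ Nat.log 2 q

lemma parent_lt {q : ℕ} (hq : q ≠ 0) : parent q < q :=
  Nat.sub_lt (Nat.pos_of_ne_zero hq) (Nat.pow_pos (by norm_num))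

lemma parent_lt_pow {q : ℕ} (hq : q ≠ 0) : parent q < 2 ^ Nat.log 2 q := by
  have h1 := Nat.lt_pow_succ_log_self (b := 2) (by norm_num) q
  have h2 : 2 ^ (Nat.log 2 q).succ = 2 ^ Nat.log 2 q + 2 ^ Nat.log 2 q := by
    rw [pow_succ]; ring
  unfold parent; omega

lemma parent_add {q : ℕ} (hq : q ≠ 0) : parent q + 2 ^ Nat.log 2 q = q :=
  Nat.sub_add_cancel (Nat.pow_log_le_self 2 hq)

/-- the source row for node `(c, q)`; `q = 0` is the original row, else an ancilla. -/
def srcI (c : Fin m) (q : ℕ) : Idx m t :=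
  if q = 0 then Sum.inl c else Sum.inr (Sum.inr (κ' Y κ k0 c q))

lemma srcI_inj {c c' : Fin m} {q q' : ℕ} (hq : q < nc Y c) (hq' : q' < nc Y c')
    (h : srcI Y κ k0 c q = srcI Y κ k0 c' q') : c = c' ∧ q = q' := by
  unfold srcI at h
  by_cases h0 : q = 0 <;> by_cases h0' : q' = 0 <;> simp [h0, h0'] at h
  · exact ⟨h, by omega⟩
  · rw [κ', dif_pos hq, κ', dif_pos hq'] at h
    have := κ.injective h
    obtain ⟨h1, h2⟩ := Sigma.mk.inj_iff.mp this
    refine ⟨h1, ?_⟩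
    subst h1
    have := congrArg Fin.val (eq_of_heq h2)
    simpa using this

/-- content vector loaded in the ancilla of node `(c, q)` (for `q ≥ 1`),
    and the standard basis vector of row `c` for `q = 0`. -/
def w (c : Fin m) : ℕ → (Idx m t → ZMod 2)
  | 0 => fun x => if x = Sum.inl c then 1 else 0
  | (q + 1) =>
      (fun x => if x = Sum.inr (Sum.inr (κ' Y κ k0 c (q + 1))) then 1 else 0)
        + w c (parent (q + 1))
  decreasing_by exact parent_lt (Nat.succ_ne_zero q)

lemma w_succ (c : Fin m) {q : ℕ} (hq : q ≠ 0) :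
    w Y κ k0 c q =
      (fun x => if x = Sum.inr (Sum.inr (κ' Y κ k0 c q)) then 1 else 0)
        + w Y κ k0 c (parent q) := by
  obtain ⟨q', rfl⟩ := Nat.exists_eq_succ_of_ne_zero hq
  rw [w]

lemma w_apply_inl (c c' : Fin m) (q : ℕ) :
    w Y κ k0 c q (Sum.inl c') = if c' = c then 1 else 0 := by
  induction q using Nat.strong_induction_on with
  | _ q ih =>
    match q with
    | 0 => simp [w, eq_comm]
    | (q + 1) =>
      rw [w]
      simp only [Pi.add_apply]
      rw [ih (parent (q + 1)) (parent_lt (Nat.succ_ne_zero q))]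
      simp

lemma w_apply_mid (c : Fin m) (q : ℕ) (j : Fin (2 ^ m)) :
    w Y κ k0 c q (Sum.inr (Sum.inl j)) = 0 := by
  induction q using Nat.strong_induction_on with
  | _ q ih =>
    match q with
    | 0 => simp [w]
    | (q + 1) =>
      rw [w]
      simp only [Pi.add_apply]
      rw [ih (parent (q + 1)) (parent_lt (Nat.succ_ne_zero q))]
      simp

end Construction
section States

variable {m t : ℕ} (Y : Matrix (Fin (2 ^ m)) (Fin m) (ZMod 2)) (κ : Node Y ↪ Fin t) (k0 : Fin t)

def Sγ (e : ℕ) : Finset (Node Y) :=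
  Finset.univ.filter (fun n => 1 ≤ n.2.val ∧ n.2.val < 2 ^ e)

def Sβ (u : ℕ) : Finset (Node Y) := Finset.univ.filter (fun n => n.1.val < u)

lemma mem_Sγ {e : ℕ} {n : Node Y} : n ∈ Sγ Y e ↔ 1 ≤ n.2.val ∧ n.2.val < 2 ^ e := by
  unfold Sγ; simp

lemma mem_Sβ {u : ℕ} {n : Node Y} : n ∈ Sβ Y u ↔ n.1.val < u := by
  unfold Sβ; simp

/-- the intermediate state of the computation -/
def PS (e u : ℕ) : Matrix (Idx m t) (Idx m t) (ZMod 2) :=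
  1 + (∑ n ∈ Sγ Y e, rowM (Sum.inr (Sum.inr (κ n))) (w Y κ k0 n.1 (parent n.2.val)))
    + (∑ n ∈ Sβ Y u, rowM (Sum.inr (Sum.inl (jof Y n))) (w Y κ k0 n.1 n.2.val))

lemma PS_row_γ (e u : ℕ) (n : Node Y) (b : Idx m t) :
    PS Y κ k0 e u (Sum.inr (Sum.inr (κ n))) b =
      (if (Sum.inr (Sum.inr (κ n)) : Idx m t) = b then 1 else 0)
        + (if n ∈ Sγ Y e then w Y κ k0 n.1 (parent n.2.val) b else 0) := by
  unfold PS
  rw [Matrix.add_apply, Matrix.add_apply, rowM_sum, rowM_sum, Matrix.one_apply]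
  have h2 : (Sβ Y u).filter
      (fun n' => (Sum.inr (Sum.inr (κ n)) : Idx m t) = Sum.inr (Sum.inl (jof Y n'))) = ∅ := by
    apply Finset.filter_eq_empty_iff.mpr
    intro n' _; simp
  rw [h2, Finset.sum_empty, add_zero]
  have h1 : (Sγ Y e).filter
      (fun n' => (Sum.inr (Sum.inr (κ n)) : Idx m t) = Sum.inr (Sum.inr (κ n'))) =
      (Sγ Y e).filter (fun n' => n' = n) := by
    ext n'
    simp only [Finset.mem_filter, Sum.inr.injEq]
    exact and_congr_right fun _ => ⟨fun h => κ.injective h.symm, fun h => by rw [h]⟩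
  rw [h1, Finset.filter_eq']
  by_cases hn : n ∈ Sγ Y e
  · rw [if_pos hn, if_pos hn, Finset.sum_singleton]
  · rw [if_neg hn, if_neg hn, Finset.sum_empty]

lemma PS_row_β (e u : ℕ) (j : Fin (2 ^ m)) (b : Idx m t) :
    PS Y κ k0 e u (Sum.inr (Sum.inl j)) b =
      (if (Sum.inr (Sum.inl j) : Idx m t) = b then 1 else 0)
        + ∑ n ∈ (Sβ Y u).filter (fun n => j = jof Y n), w Y κ k0 n.1 n.2.val b := by
  unfold PS
  rw [Matrix.add_apply, Matrix.add_apply, rowM_sum, rowM_sum, Matrix.one_apply]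
  have h1 : (Sγ Y e).filter
      (fun n' => (Sum.inr (Sum.inl j) : Idx m t) = Sum.inr (Sum.inr (κ n'))) = ∅ := by
    apply Finset.filter_eq_empty_iff.mpr
    intro n' _; simp
  rw [h1, Finset.sum_empty, add_zero]
  have h3 : (Sβ Y u).filter
      (fun n' => (Sum.inr (Sum.inl j) : Idx m t) = Sum.inr (Sum.inl (jof Y n'))) =
      (Sβ Y u).filter (fun n => j = jof Y n) := by
    ext n'
    simp [Finset.mem_filter]
  rw [h3]

lemma PS_row_α (e u : ℕ) (c : Fin m) (b : Idx m t) :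
    PS Y κ k0 e u (Sum.inl c) b = if (Sum.inl c : Idx m t) = b then 1 else 0 := by
  unfold PS
  rw [Matrix.add_apply, Matrix.add_apply, rowM_sum, rowM_sum, Matrix.one_apply]
  rw [Finset.filter_eq_empty_iff.mpr (by intro n' _; simp),
    Finset.filter_eq_empty_iff.mpr (by intro n' _; simp)]
  simp

lemma PS_src (e u : ℕ) (c : Fin m) (q : ℕ) (hq : q < nc Y c) (hlt : q < 2 ^ e) (b : Idx m t) :
    PS Y κ k0 e u (srcI Y κ k0 c q) b = w Y κ k0 c q b := by
  by_cases h0 : q = 0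
  · subst h0
    rw [srcI, if_pos rfl, PS_row_α, w]
    simp [eq_comm]
  · rw [srcI, if_neg h0, κ', dif_pos hq]
    set n : Node Y := ⟨c, ⟨q, hq⟩⟩ with hn
    have hmem : n ∈ Sγ Y e := by
      refine (mem_Sγ Y).mpr ?_
      show 1 ≤ q ∧ q < 2 ^ e
      exact ⟨by omega, hlt⟩
    rw [PS_row_γ Y κ k0 e u n b, if_pos hmem,
      w_succ Y κ k0 c h0, Pi.add_apply, κ', dif_pos hq]
    congr 1
    exact if_congr eq_comm rfl rfl

lemma Lγ_mem_iff (e : ℕ) (n : Node Y) :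
    (1 ≤ n.2.val ∧ n.2.val < 2 ^ (e + 1)) ↔
      ((1 ≤ n.2.val ∧ n.2.val < 2 ^ e) ∨ (1 ≤ n.2.val ∧ Nat.log 2 n.2.val = e)) := by
  constructor
  · rintro ⟨h1, h2⟩
    by_cases h : n.2.val < 2 ^ e
    · exact Or.inl ⟨h1, h⟩
    · exact Or.inr ⟨h1, Nat.log_eq_of_pow_le_of_lt_pow (by omega) h2⟩
  · rintro (⟨h1, h2⟩ | ⟨h1, h2⟩)
    · constructor
      · exact h1
      · have : (2:ℕ) ^ e ≤ 2 ^ (e + 1) := Nat.pow_le_pow_right (by norm_num) (by omega)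
        omega
    · refine ⟨h1, ?_⟩
      have := Nat.lt_pow_succ_log_self (b := 2) (by norm_num) n.2.val
      rw [h2] at this
      exact this

def Lγ (e : ℕ) : Finset (Node Y) :=
  Finset.univ.filter (fun n => 1 ≤ n.2.val ∧ Nat.log 2 n.2.val = e)

lemma PS_succ_γ (e u : ℕ) :
    PS Y κ k0 (e + 1) u = PS Y κ k0 e u
      + ∑ n ∈ Lγ Y e, rowM (Sum.inr (Sum.inr (κ n))) (w Y κ k0 n.1 (parent n.2.val)) := by
  have hdisj : Disjoint (Sγ Y e) (Lγ Y e) := by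
    rw [Finset.disjoint_left]
    intro n hn hn'
    simp only [Sγ, Lγ, Finset.mem_filter] at hn hn'
    have := Nat.pow_log_le_self 2 (x := n.2.val) (by omega)
    rw [hn'.2.2] at this
    omega
  have hset : Sγ Y (e + 1) = Sγ Y e ∪ Lγ Y e := by
    ext n
    simp only [Sγ, Lγ, Finset.mem_union, Finset.mem_filter, Finset.mem_univ, true_and]
    exact Lγ_mem_iff Y e n
  unfold PS
  rw [hset, Finset.sum_union hdisj]
  abel

lemma PS_succ_β (e u : ℕ) :
    PS Y κ k0 e (u + 1) = PS Y κ k0 e u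
      + ∑ n ∈ Finset.univ.filter (fun n : Node Y => n.1.val = u),
          rowM (Sum.inr (Sum.inl (jof Y n))) (w Y κ k0 n.1 n.2.val) := by
  have hdisj : Disjoint (Sβ Y u) (Finset.univ.filter (fun n : Node Y => n.1.val = u)) := by
    rw [Finset.disjoint_left]
    intro n hn hn'
    simp only [Sβ, Finset.mem_filter] at hn hn'
    omega
  have hset : Sβ Y (u + 1) = Sβ Y u ∪ Finset.univ.filter (fun n : Node Y => n.1.val = u) := by
    ext n
    simp only [Sβ, Finset.mem_union, Finset.mem_filter, Finset.mem_univ, true_and]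
    omega
  unfold PS
  rw [hset, Finset.sum_union hdisj]
  abel

end States
section Layers

variable {m t : ℕ} (Y : Matrix (Fin (2 ^ m)) (Fin m) (ZMod 2)) (κ : Node Y ↪ Fin t) (k0 : Fin t)

lemma node_ext {n n' : Node Y} (h1 : n.1 = n'.1) (h2 : n.2.val = n'.2.val) : n = n' := by
  obtain ⟨c, r⟩ := n
  obtain ⟨c', r'⟩ := n'
  dsimp at h1 h2
  subst h1
  exact congrArg _ (Fin.ext h2)

lemma jof_inj' {n n' : Node Y} (h1 : n.1 = n'.1) (h2 : jof Y n = jof Y n') : n = n' := by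
  obtain ⟨c, r⟩ := n
  obtain ⟨c', r'⟩ := n'
  dsimp at h1
  subst h1
  exact congrArg _ (jof_inj Y h2)

def FanA (e : ℕ) : Type := {n : Node Y // 1 ≤ n.2.val ∧ Nat.log 2 n.2.val = e}

instance (e : ℕ) : Fintype (FanA Y e) := by unfold FanA; infer_instance
instance (e : ℕ) : DecidableEq (FanA Y e) := by unfold FanA; infer_instance

def MidA (c : ℕ) : Type := {n : Node Y // n.1.val = c}

instance (c : ℕ) : Fintype (MidA Y c) := by unfold MidA; infer_instance
instance (c : ℕ) : DecidableEq (MidA Y c) := by unfold MidA; infer_instance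

def Rfan (e : ℕ) : Matrix (Idx m t) (Idx m t) (ZMod 2) :=
  elim (fun a : FanA Y e => Sum.inr (Sum.inr (κ a.1)))
    (fun a => srcI Y κ k0 a.1.1 (parent a.1.2.val))

def Rmid (c : ℕ) : Matrix (Idx m t) (Idx m t) (ZMod 2) :=
  elim (fun a : MidA Y c => Sum.inr (Sum.inl (jof Y a.1)))
    (fun a => srcI Y κ k0 a.1.1 a.1.2.val)

lemma fan_tgt_inj (e : ℕ) :
    Function.Injective (fun a : FanA Y e => (Sum.inr (Sum.inr (κ a.1)) : Idx m t)) := by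
  intro a b h
  simp only [Sum.inr.injEq] at h
  exact Subtype.ext (κ.injective h)

lemma mid_tgt_inj (c : ℕ) :
    Function.Injective (fun a : MidA Y c => (Sum.inr (Sum.inl (jof Y a.1)) : Idx m t)) := by
  intro a b h
  simp only [Sum.inr.injEq, Sum.inl.injEq] at h
  exact Subtype.ext (jof_inj' Y (Fin.ext (a.2.trans b.2.symm)) h)

lemma fan_parent_lt_nc (e : ℕ) (a : FanA Y e) :
    parent a.1.2.val < nc Y a.1.1 :=
  lt_trans (parent_lt (by have := a.2.1; omega)) a.1.2.isLt

lemma fan_parent_lt_pow (e : ℕ) (a : FanA Y e) : parent a.1.2.val < 2 ^ e := by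
  have := parent_lt_pow (q := a.1.2.val) (by have := a.2.1; omega)
  rw [a.2.2] at this
  exact this

lemma fan_pow_le (e : ℕ) (a : FanA Y e) : 2 ^ e ≤ a.1.2.val := by
  have := Nat.pow_log_le_self 2 (x := a.1.2.val) (by have := a.2.1; omega)
  rw [a.2.2] at this
  exact this

lemma fan_cross (e : ℕ) (a b : FanA Y e) :
    srcI Y κ k0 a.1.1 (parent a.1.2.val) ≠ Sum.inr (Sum.inr (κ b.1)) := by
  intro h
  by_cases h0 : parent a.1.2.val = 0
  · rw [srcI, if_pos h0] at h
    exact absurd h (by simp)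
  · rw [srcI, if_neg h0] at h
    simp only [Sum.inr.injEq] at h
    have hplt : parent a.1.2.val < nc Y a.1.1 := fan_parent_lt_nc Y e a
    rw [κ', dif_pos hplt] at h
    have heq : (⟨a.1.1, ⟨parent a.1.2.val, hplt⟩⟩ : Node Y) = b.1 := κ.injective h
    have hval : parent a.1.2.val = b.1.2.val := by
      have := congrArg (fun n : Node Y => n.2.val) heq
      simpa using this
    have h1 : parent a.1.2.val < 2 ^ e := fan_parent_lt_pow Y e a
    have h2 : 2 ^ e ≤ b.1.2.val := fan_pow_le Y e b
    omega

lemma fan_inj (e : ℕ) :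
    Function.Injective
      (Sum.elim (fun a : FanA Y e => srcI Y κ k0 a.1.1 (parent a.1.2.val))
        (fun a : FanA Y e => (Sum.inr (Sum.inr (κ a.1)) : Idx m t))) := by
  intro x y h
  cases x with
  | inl a =>
    cases y with
    | inl b =>
      simp only [Sum.elim_inl] at h
      obtain ⟨hc, hq⟩ := srcI_inj Y κ k0 (fan_parent_lt_nc Y e a) (fan_parent_lt_nc Y e b) h
      have ha' := parent_add (q := a.1.2.val) (by have := a.2.1; omega)
      have hb' := parent_add (q := b.1.2.val) (by have := b.2.1; omega)
      rw [a.2.2] at ha'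
      rw [b.2.2] at hb'
      exact congrArg Sum.inl (Subtype.ext (node_ext Y hc (by omega)))
    | inr b =>
      simp only [Sum.elim_inl, Sum.elim_inr] at h
      exact absurd h (fan_cross Y κ k0 e a b)
  | inr a =>
    cases y with
    | inl b =>
      simp only [Sum.elim_inl, Sum.elim_inr] at h
      exact absurd h.symm (fan_cross Y κ k0 e b a)
    | inr b =>
      simp only [Sum.elim_inr] at h
      exact congrArg Sum.inr (fan_tgt_inj Y κ e h)

lemma srcI_ne_mid (c : Fin m) (q : ℕ) (j : Fin (2 ^ m)) :
    srcI Y κ k0 c q ≠ Sum.inr (Sum.inl j) := by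
  unfold srcI
  split <;> simp

lemma mid_inj (c : ℕ) :
    Function.Injective
      (Sum.elim (fun a : MidA Y c => srcI Y κ k0 a.1.1 a.1.2.val)
        (fun a : MidA Y c => (Sum.inr (Sum.inl (jof Y a.1)) : Idx m t))) := by
  intro x y h
  cases x with
  | inl a =>
    cases y with
    | inl b =>
      simp only [Sum.elim_inl] at h
      obtain ⟨hc, hq⟩ := srcI_inj Y κ k0 a.1.2.isLt b.1.2.isLt h
      exact congrArg Sum.inl (Subtype.ext (node_ext Y hc hq))
    | inr b =>
      simp only [Sum.elim_inl, Sum.elim_inr] at h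
      exact absurd h (srcI_ne_mid Y κ k0 _ _ _)
  | inr a =>
    cases y with
    | inl b =>
      simp only [Sum.elim_inl, Sum.elim_inr] at h
      exact absurd h.symm (srcI_ne_mid Y κ k0 _ _ _)
    | inr b =>
      simp only [Sum.elim_inr] at h
      exact congrArg Sum.inr (mid_tgt_inj Y c h)

lemma fan_notmem_Sγ (e : ℕ) (a : FanA Y e) : a.1 ∉ Sγ Y e := by
  rw [mem_Sγ]
  push_neg
  intro _
  exact fan_pow_le Y e a

lemma fan_filter_tgt (e : ℕ) (a : FanA Y e) :
    (Lγ Y e).filter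
      (fun n => (Sum.inr (Sum.inr (κ a.1)) : Idx m t) = Sum.inr (Sum.inr (κ n))) = {a.1} := by
  ext n'
  simp only [Finset.mem_filter, Finset.mem_singleton, Sum.inr.injEq]
  constructor
  · rintro ⟨_, h⟩
    exact (κ.injective h).symm
  · rintro rfl
    refine ⟨?_, rfl⟩
    unfold Lγ
    simp only [Finset.mem_filter, Finset.mem_univ, true_and]
    exact a.2

lemma fan_filter_empty (e : ℕ) {x : Idx m t}
    (hx : ∀ a : FanA Y e, (Sum.inr (Sum.inr (κ a.1)) : Idx m t) ≠ x) :
    (Lγ Y e).filter (fun n => x = Sum.inr (Sum.inr (κ n))) = ∅ := by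
  apply Finset.filter_eq_empty_iff.mpr
  intro n' hn'
  unfold Lγ at hn'
  simp only [Finset.mem_filter, Finset.mem_univ, true_and] at hn'
  exact fun hxx => hx ⟨n', hn'⟩ hxx.symm

lemma stepFan (e u : ℕ) :
    Rfan Y κ k0 e * PS Y κ k0 e u = PS Y κ k0 (e + 1) u := by
  rw [PS_succ_γ]
  ext x b
  rw [Matrix.add_apply, rowM_sum]
  by_cases hx : ∃ a : FanA Y e, (Sum.inr (Sum.inr (κ a.1)) : Idx m t) = x
  · obtain ⟨a, rfl⟩ := hx
    rw [Rfan, elim_mul_apply_tgt (fan_tgt_inj Y κ e) a]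
    rw [PS_row_γ Y κ k0 e u a.1 b, if_neg (fan_notmem_Sγ Y e a), add_zero]
    rw [PS_src Y κ k0 e u a.1.1 (parent a.1.2.val) (fan_parent_lt_nc Y e a)
      (fan_parent_lt_pow Y e a) b]
    rw [fan_filter_tgt Y κ e a, Finset.sum_singleton]
  · have hxne : ∀ a : FanA Y e, (Sum.inr (Sum.inr (κ a.1)) : Idx m t) ≠ x :=
      fun a h => hx ⟨a, h⟩
    rw [Rfan, elim_mul_apply_of_ne hxne]
    rw [fan_filter_empty Y κ e hxne, Finset.sum_empty, add_zero]

lemma fan_filter_src (e : ℕ) (a : FanA Y e) :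
    (Lγ Y e).filter
      (fun n => srcI Y κ k0 a.1.1 (parent a.1.2.val) = Sum.inr (Sum.inr (κ n))) = ∅ := by
  apply Finset.filter_eq_empty_iff.mpr
  intro n' hn'
  unfold Lγ at hn'
  simp only [Finset.mem_filter, Finset.mem_univ, true_and] at hn'
  exact fan_cross Y κ k0 e a ⟨n', hn'⟩

lemma stepClean (e u : ℕ) :
    Rfan Y κ k0 e * PS Y κ k0 (e + 1) u = PS Y κ k0 e u := by
  rw [PS_succ_γ]
  ext x b
  by_cases hx : ∃ a : FanA Y e, (Sum.inr (Sum.inr (κ a.1)) : Idx m t) = x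
  · obtain ⟨a, rfl⟩ := hx
    rw [Rfan, elim_mul_apply_tgt (fan_tgt_inj Y κ e) a]
    rw [Matrix.add_apply, Matrix.add_apply, rowM_sum, rowM_sum]
    rw [fan_filter_tgt Y κ e a, Finset.sum_singleton]
    rw [fan_filter_src Y κ k0 e a, Finset.sum_empty, add_zero]
    rw [PS_row_γ Y κ k0 e u a.1 b, if_neg (fan_notmem_Sγ Y e a), add_zero]
    rw [PS_src Y κ k0 e u a.1.1 (parent a.1.2.val) (fan_parent_lt_nc Y e a)
      (fan_parent_lt_pow Y e a) b]
    have hh : ∀ p q : ZMod 2, (p + q) + q = p := by decide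
    exact hh _ _
  · have hxne : ∀ a : FanA Y e, (Sum.inr (Sum.inr (κ a.1)) : Idx m t) ≠ x :=
      fun a h => hx ⟨a, h⟩
    rw [Rfan, elim_mul_apply_of_ne hxne]
    rw [Matrix.add_apply, rowM_sum, fan_filter_empty Y κ e hxne, Finset.sum_empty, add_zero]

lemma mid_filter_tgt (c : ℕ) (a : MidA Y c) :
    (Finset.univ.filter (fun n : Node Y => n.1.val = c)).filter
      (fun n => (Sum.inr (Sum.inl (jof Y a.1)) : Idx m t) = Sum.inr (Sum.inl (jof Y n)))
      = {a.1} := by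
  ext n'
  simp only [Finset.mem_filter, Finset.mem_univ, true_and, Finset.mem_singleton,
    Sum.inr.injEq, Sum.inl.injEq]
  constructor
  · rintro ⟨hc', hj⟩
    exact jof_inj' Y (Fin.ext (hc'.trans a.2.symm)) hj.symm
  · rintro rfl
    exact ⟨a.2, rfl⟩

lemma mid_filter_empty (c : ℕ) {x : Idx m t}
    (hx : ∀ a : MidA Y c, (Sum.inr (Sum.inl (jof Y a.1)) : Idx m t) ≠ x) :
    (Finset.univ.filter (fun n : Node Y => n.1.val = c)).filter
      (fun n => x = Sum.inr (Sum.inl (jof Y n))) = ∅ := by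
  apply Finset.filter_eq_empty_iff.mpr
  intro n' hn'
  simp only [Finset.mem_filter, Finset.mem_univ, true_and] at hn'
  exact fun hxx => hx ⟨n', hn'⟩ hxx.symm

lemma stepMid (c : ℕ) :
    Rmid Y κ k0 c * PS Y κ k0 m c = PS Y κ k0 m (c + 1) := by
  rw [PS_succ_β]
  ext x b
  rw [Matrix.add_apply, rowM_sum]
  by_cases hx : ∃ a : MidA Y c, (Sum.inr (Sum.inl (jof Y a.1)) : Idx m t) = x
  · obtain ⟨a, rfl⟩ := hx
    rw [Rmid, elim_mul_apply_tgt (mid_tgt_inj Y c) a]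
    rw [PS_src Y κ k0 m c a.1.1 a.1.2.val a.1.2.isLt
      (lt_of_lt_of_le a.1.2.isLt (nc_le Y a.1.1)) b]
    rw [mid_filter_tgt Y c a, Finset.sum_singleton]
  · have hxne : ∀ a : MidA Y c, (Sum.inr (Sum.inl (jof Y a.1)) : Idx m t) ≠ x :=
      fun a h => hx ⟨a, h⟩
    rw [Rmid, elim_mul_apply_of_ne hxne]
    rw [mid_filter_empty Y c hxne, Finset.sum_empty, add_zero]

end Layers
lemma prod_steps {G : Type*} [Monoid G] :
    ∀ (d : ℕ) (R : Fin d → G) (P : ℕ → G), P 0 = 1 →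
      (∀ l : Fin d, R l * P l.val = P (l.val + 1)) →
      ((List.ofFn R).reverse).prod = P d := by
  intro d
  induction d with
  | zero =>
    intro R P h0 _
    simp [h0.symm]
  | succ d ih =>
    intro R P h0 hstep
    rw [List.ofFn_succ', List.concat_eq_append, List.reverse_append, List.reverse_singleton,
      List.singleton_append, List.prod_cons]
    rw [ih (fun i => R i.castSucc) P h0 (fun l => hstep l.castSucc)]
    exact hstep (Fin.last d)

section Final

variable {m t : ℕ} (Y : Matrix (Fin (2 ^ m)) (Fin m) (ZMod 2)) (κ : Node Y ↪ Fin t) (k0 : Fin t)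

def Emat : Matrix (Fin (2 ^ m)) (Fin t) (ZMod 2) := fun j k =>
  ∑ n ∈ Finset.univ.filter (fun n : Node Y => j = jof Y n),
    w Y κ k0 n.1 n.2.val (Sum.inr (Sum.inr k))

lemma Sγ_zero : Sγ Y 0 = ∅ := by
  ext n
  simp only [mem_Sγ, Finset.notMem_empty, iff_false]
  omega

lemma Sβ_zero : Sβ Y 0 = ∅ := by
  ext n
  simp only [mem_Sβ, Finset.notMem_empty, iff_false]
  omega

lemma Sβ_top : Sβ Y m = Finset.univ := by
  ext n
  simp only [mem_Sβ, Finset.mem_univ, iff_true]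
  exact n.1.isLt

lemma PS_zero : PS Y κ k0 0 0 = 1 := by
  unfold PS
  rw [Sγ_zero, Sβ_zero, Finset.sum_empty, Finset.sum_empty, add_zero, add_zero]

lemma card_filter_jof (j : Fin (2 ^ m)) (c' : Fin m) :
    ((Finset.univ.filter (fun n : Node Y => j = jof Y n)).filter (fun n => c' = n.1)).card
      = if Y j c' ≠ 0 then 1 else 0 := by
  by_cases hY : Y j c' = 0
  · rw [if_neg (fun h => h hY), Finset.card_eq_zero]
    ext n
    simp only [Finset.mem_filter, Finset.mem_univ, true_and, Finset.notMem_empty, iff_false,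
      not_and]
    intro hj hc
    rw [hj, hc] at hY
    exact absurd hY (jof_prop Y n)
  · rw [if_pos hY, Finset.card_eq_one]
    obtain ⟨r, hr⟩ := exists_rank Y hY
    set n0 : Node Y := ⟨c', r⟩ with hn0
    refine ⟨n0, ?_⟩
    ext n
    simp only [Finset.mem_filter, Finset.mem_univ, true_and, Finset.mem_singleton]
    constructor
    · rintro ⟨hj, hc⟩
      exact jof_inj' Y hc.symm (by rw [← hj, hr])
    · rintro rfl
      exact ⟨hr.symm, rfl⟩

lemma PS_final :
    PS Y κ k0 0 m = Matrix.fromBlocks 1 0 (Matrix.fromRows Y 0)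
      (Matrix.fromBlocks 1 (Emat Y κ k0) 0 1) := by
  have hone : ∀ a : ZMod 2, a ≠ 0 → a = 1 := by decide
  ext x b
  unfold PS
  rw [Sγ_zero, Finset.sum_empty, add_zero, Sβ_top]
  rw [Matrix.add_apply, rowM_sum]
  cases x with
  | inl c =>
    rw [Finset.filter_eq_empty_iff.mpr (fun n _ => by simp), Finset.sum_empty, add_zero]
    cases b with
    | inl c' =>
      rw [Matrix.fromBlocks_apply₁₁, Matrix.one_apply, Matrix.one_apply]
      by_cases h : c = c' <;> simp [h]
    | inr b' =>
      cases b' <;>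
        · rw [Matrix.fromBlocks_apply₁₂, Matrix.one_apply_ne (by simp)]
          simp
  | inr x' =>
    cases x' with
    | inl j =>
      have hfil : Finset.univ.filter
          (fun n : Node Y => (Sum.inr (Sum.inl j) : Idx m t) = Sum.inr (Sum.inl (jof Y n)))
          = Finset.univ.filter (fun n : Node Y => j = jof Y n) := by
        ext n
        simp
      rw [hfil]
      cases b with
      | inl c' =>
        rw [Matrix.one_apply_ne (by simp), zero_add]
        rw [Finset.sum_congr rfl (fun n _ => w_apply_inl Y κ k0 n.1 c' n.2.val)]
        rw [Finset.sum_boole, card_filter_jof Y j c']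
        rw [Matrix.fromBlocks_apply₂₁, Matrix.fromRows_apply_inl]
        by_cases h : Y j c' = 0
        · simp [h]
        · rw [if_pos h, hone _ h]
          simp
      | inr b' =>
        cases b' with
        | inl j' =>
          rw [Finset.sum_eq_zero (fun n _ => w_apply_mid Y κ k0 n.1 n.2.val j'), add_zero]
          rw [Matrix.fromBlocks_apply₂₂, Matrix.fromBlocks_apply₁₁,
            Matrix.one_apply, Matrix.one_apply]
          by_cases h : j = j' <;> simp [h]
        | inr k =>
          rw [Matrix.one_apply_ne (by simp), zero_add]
          rw [Matrix.fromBlocks_apply₂₂, Matrix.fromBlocks_apply₁₂]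
          rfl
    | inr k =>
      rw [Finset.filter_eq_empty_iff.mpr (fun n _ => by simp), Finset.sum_empty, add_zero]
      cases b with
      | inl c' =>
        rw [Matrix.one_apply_ne (by simp), Matrix.fromBlocks_apply₂₁, Matrix.fromRows_apply_inr]
        rfl
      | inr b' =>
        cases b' with
        | inl j' =>
          rw [Matrix.one_apply_ne (by simp), Matrix.fromBlocks_apply₂₂,
            Matrix.fromBlocks_apply₂₁]
          rfl
        | inr k' =>
          rw [Matrix.fromBlocks_apply₂₂, Matrix.fromBlocks_apply₂₂,
            Matrix.one_apply, Matrix.one_apply]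
          by_cases h : k = k' <;> simp [h]

end Final

end CnotSparse

open CnotSparse in
theorem cnot_construct_sparse_slim :
    ∃ C : ℝ, 0 < C ∧ ∀ m : ℕ, 1 ≤ m →
    ∀ t : ℕ, 1 ≤ t → t ≤ m * 2 ^ m →
    ∀ Y : Matrix (Fin (2 ^ m)) (Fin m) (ZMod 2),
    (Finset.univ.filter (fun p : Fin (2 ^ m) × Fin m => Y p.1 p.2 ≠ 0)).card ≤ t →
    ∃ (E : Matrix (Fin (2 ^ m)) (Fin t) (ZMod 2)) (d : ℕ),
      (d : ℝ) ≤ C * (m : ℝ) ∧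
      ∃ R : Fin d → Matrix (Fin m ⊕ (Fin (2 ^ m) ⊕ Fin t))
          (Fin m ⊕ (Fin (2 ^ m) ⊕ Fin t)) (ZMod 2),
        (∀ k, IsParallelRowElim (R k)) ∧
        ((List.ofFn R).reverse).prod =
          Matrix.fromBlocks 1 0 (Matrix.fromRows Y 0) (Matrix.fromBlocks 1 E 0 1) := by
  refine ⟨3, by norm_num, ?_⟩
  intro m hm t ht htm Y hY
  -- obtain the ancilla assignment
  have hinjf : Function.Injective
      (fun n : Node Y => (⟨(jof Y n, n.1), jof_prop Y n⟩ :
        {p : Fin (2 ^ m) × Fin m // Y p.1 p.2 ≠ 0})) := by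
    intro n n' h
    simp only [Subtype.mk.injEq, Prod.mk.injEq] at h
    exact jof_inj' Y h.2 h.1
  have hcard : Fintype.card (Node Y) ≤ t := by
    calc Fintype.card (Node Y) ≤ Fintype.card {p : Fin (2 ^ m) × Fin m // Y p.1 p.2 ≠ 0} :=
          Fintype.card_le_of_injective _ hinjf
      _ = (Finset.univ.filter (fun p : Fin (2 ^ m) × Fin m => Y p.1 p.2 ≠ 0)).card :=
          Fintype.card_subtype _
      _ ≤ t := hY
  obtain ⟨κ⟩ := Function.Embedding.nonempty_of_card_le
    (le_trans hcard (by simp : t ≤ Fintype.card (Fin t)))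
  set k0 : Fin t := ⟨0, ht⟩
  refine ⟨Emat Y κ k0, 3 * m, by push_cast; nlinarith, ?_⟩
  set Rseq : ℕ → Matrix (Idx m t) (Idx m t) (ZMod 2) := fun l =>
    if l < m then Rfan Y κ k0 l
    else if l < 2 * m then Rmid Y κ k0 (l - m)
    else Rfan Y κ k0 (3 * m - 1 - l) with hRseq
  refine ⟨fun l => Rseq l.val, ?_, ?_⟩
  · intro l
    rw [hRseq]
    dsimp only
    split
    · exact elim_isParallel _ _ (fan_inj Y κ k0 _)
    split
    · exact elim_isParallel _ _ (mid_inj Y κ k0 _)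
    · exact elim_isParallel _ _ (fan_inj Y κ k0 _)
  · set P : ℕ → Matrix (Idx m t) (Idx m t) (ZMod 2) := fun l =>
      PS Y κ k0 (min l (min m (3 * m - l))) (min (l - m) m) with hP
    have hstep : ∀ l : Fin (3 * m), Rseq l.val * P l.val = P (l.val + 1) := by
      intro l
      have hl3 : l.val < 3 * m := l.isLt
      rw [hRseq, hP]
      dsimp only
      rcases lt_or_ge l.val m with hcase | hcase
      · rw [if_pos hcase]
        have e1 : min l.val (min m (3 * m - l.val)) = l.val := by omega
        have e2 : min (l.val + 1) (min m (3 * m - (l.val + 1))) = l.val + 1 := by omega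
        have e3 : min (l.val - m) m = 0 := by omega
        have e4 : min (l.val + 1 - m) m = 0 := by omega
        rw [e1, e2, e3, e4]
        exact stepFan Y κ k0 l.val 0
      rcases lt_or_ge l.val (2 * m) with hcase2 | hcase2
      · rw [if_neg (by omega), if_pos hcase2]
        have e1 : min l.val (min m (3 * m - l.val)) = m := by omega
        have e2 : min (l.val + 1) (min m (3 * m - (l.val + 1))) = m := by omega
        have e3 : min (l.val - m) m = l.val - m := by omega
        have e4 : min (l.val + 1 - m) m = (l.val - m) + 1 := by omega
        rw [e1, e2, e3, e4]
        exact stepMid Y κ k0 (l.val - m)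
      · rw [if_neg (by omega), if_neg (by omega)]
        have e1 : min l.val (min m (3 * m - l.val)) = (3 * m - 1 - l.val) + 1 := by omega
        have e2 : min (l.val + 1) (min m (3 * m - (l.val + 1))) = 3 * m - 1 - l.val := by
          omega
        have e3 : min (l.val - m) m = m := by omega
        have e4 : min (l.val + 1 - m) m = m := by omega
        rw [e1, e2, e3, e4]
        exact stepClean Y κ k0 (3 * m - 1 - l.val) m
    have h0 : P 0 = 1 := by
      rw [hP]
      dsimp only
      have e1 : min 0 (min m (3 * m - 0)) = 0 := by omega
      have e2 : min (0 - m) m = 0 := by omega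
      rw [e1, e2]
      exact PS_zero Y κ k0
    rw [prod_steps (3 * m) (fun l => Rseq l.val) P h0 hstep]
    rw [hP]
    dsimp only
    have e1 : min (3 * m) (min m (3 * m - 3 * m)) = 0 := by omega
    have e2 : min (3 * m - m) m = m := by omega
    rw [e1, e2]
    exact PS_final Y κ k0
end

section
/- For every integer n ≥ 1 and every invertible matrix M ∈ GL(n, F₂), there exist a natural number d ≤ 4n and parallel row-elimination matrices R₁, …, R_d ∈ F₂^{n×n} such that R_d ⋯ R₂R₁M = I. -/
open Matrix

namespace CnotAux

variable {ι : Type} [Fintype ι] [DecidableEq ι]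

abbrev Mx (ι : Type) := Matrix ι ι (ZMod 2)

lemma zmod2_eq01 (v : ZMod 2) : v = 0 ∨ v = 1 := by revert v; decide

set_option linter.unusedSectionVars false

lemma zmod2_add_self (v : ZMod 2) : v + v = 0 := by revert v; decide

lemma mx_add_self (A : Mx ι) : A + A = 0 := by
  ext x y; simpa using zmod2_add_self (A x y)

lemma sum_std_apply (s : Finset ι) (g : ι → ι) (a b : ι) :
    (∑ x ∈ s, Matrix.single x (g x) (1 : ZMod 2)) a b
      = if a ∈ s ∧ g a = b then 1 else 0 := by
  rw [Matrix.sum_apply]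
  have h : ∀ x ∈ s, Matrix.single x (g x) (1 : ZMod 2) a b
      = if x = a then (if g a = b then (1:ZMod 2) else 0) else 0 := by
    intro x hx
    by_cases hxa : x = a
    · subst hxa; simp [Matrix.single, Matrix.of_apply]
    · simp [Matrix.single, Matrix.of_apply, hxa]
  rw [Finset.sum_congr rfl h, Finset.sum_ite_eq' s a (fun _ => if g a = b then (1:ZMod 2) else 0)]
  by_cases ha : a ∈ s <;> simp [ha]

def GoodLayer (S : Finset ι) (A : Mx ι) : Prop :=
  ∃ (s : Finset ι) (g : ι → ι), Set.InjOn g s ∧ (∀ x ∈ s, x ∈ S) ∧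
    (∀ x ∈ s, g x ∈ S) ∧ (∀ x ∈ s, g x ∉ s) ∧
    A = 1 + ∑ x ∈ s, Matrix.single x (g x) 1

lemma goodLayer_one (S : Finset ι) : GoodLayer S (1 : Mx ι) := by
  refine ⟨∅, id, ?_, ?_, ?_, ?_, by simp⟩ <;> simp [Set.InjOn]

lemma GoodLayer.mono {S S' : Finset ι} (hss : S ⊆ S') {A : Mx ι} (h : GoodLayer S A) :
    GoodLayer S' A := by
  obtain ⟨s, g, h1, h2, h3, h4, h5⟩ := h
  exact ⟨s, g, h1, fun x hx => hss (h2 x hx), fun x hx => hss (h3 x hx), h4, h5⟩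

lemma GoodLayer.isParallelRowElim {S : Finset ι} {A : Mx ι} (h : GoodLayer S A) :
    IsParallelRowElim A := by
  obtain ⟨s, g, hinj, _, _, hout, hA⟩ := h
  right
  refine ⟨s.card, fun k => g ((s.equivFin.symm k : {x // x ∈ s}) : ι),
    fun k => ((s.equivFin.symm k : {x // x ∈ s}) : ι), ?_, ?_⟩
  · intro a b hab
    match a, b with
    | Sum.inl a, Sum.inl b =>
      simp only [Sum.elim_inl] at hab
      have := hinj (s.equivFin.symm a).2 (s.equivFin.symm b).2 hab
      exact congrArg Sum.inl (s.equivFin.symm.injective (Subtype.ext this))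
    | Sum.inl a, Sum.inr b =>
      exfalso
      simp only [Sum.elim_inl, Sum.elim_inr] at hab
      exact hout _ (s.equivFin.symm a).2 (hab ▸ (s.equivFin.symm b).2)
    | Sum.inr a, Sum.inl b =>
      exfalso
      simp only [Sum.elim_inl, Sum.elim_inr] at hab
      exact hout _ (s.equivFin.symm b).2 (hab ▸ (s.equivFin.symm a).2)
    | Sum.inr a, Sum.inr b =>
      simp only [Sum.elim_inr] at hab
      exact congrArg Sum.inr (s.equivFin.symm.injective (Subtype.ext hab))
  · rw [hA]
    congr 1
    rw [← Finset.sum_coe_sort s (fun x => Matrix.single x (g x) (1 : ZMod 2))]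
    exact (Equiv.sum_comp s.equivFin.symm
      (fun a : {x // x ∈ s} => Matrix.single (a : ι) (g a) (1 : ZMod 2))).symm

/-- entries of the off-diagonal part of a good layer -/
lemma GoodLayer.support {S : Finset ι} {A : Mx ι} (h : GoodLayer S A) :
    ∃ N : Mx ι, A = 1 + N ∧ (∀ x y, N x y ≠ 0 → x ∈ S ∧ y ∈ S ∧ x ≠ y) := by
  obtain ⟨s, g, hinj, hs, hgs, hout, hA⟩ := h
  refine ⟨_, hA, ?_⟩
  intro x y hN
  rw [sum_std_apply] at hN
  by_cases hc : x ∈ s ∧ g x = y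
  · refine ⟨hs x hc.1, hc.2 ▸ hgs x hc.1, ?_⟩
    rintro rfl
    exact hout x hc.1 (by rw [hc.2]; exact hc.1)
  · simp [hc] at hN

lemma mul_supp_zero {N₁ N₂ : Mx ι} {T B : Finset ι}
    (h1 : ∀ x y, N₁ x y ≠ 0 → y ∈ T) (h2 : ∀ x y, N₂ x y ≠ 0 → x ∈ B)
    (hd : Disjoint T B) : N₁ * N₂ = 0 := by
  ext x y
  rw [Matrix.mul_apply]
  refine Finset.sum_eq_zero fun z _ => ?_
  by_cases hz1 : N₁ x z = 0
  · simp [hz1]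
  by_cases hz2 : N₂ z y = 0
  · simp [hz2]
  exact absurd (h2 z y hz2) (Finset.disjoint_left.mp hd (h1 x z hz1))

lemma layer_comm {T B : Finset ι} {A A' : Mx ι} (hA : GoodLayer T A) (hA' : GoodLayer B A')
    (hd : Disjoint T B) : A * A' = A' * A := by
  obtain ⟨N₁, rfl, h1⟩ := hA.support
  obtain ⟨N₂, rfl, h2⟩ := hA'.support
  have e1 : N₁ * N₂ = 0 := mul_supp_zero (fun x y h => (h1 x y h).2.1) (fun x y h => (h2 x y h).1) hd
  have e2 : N₂ * N₁ = 0 := mul_supp_zero (fun x y h => (h2 x y h).2.1) (fun x y h => (h1 x y h).1) hd.symm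
  have q1 : (1+N₁)*(1+N₂) = 1 + N₁ + N₂ + N₁*N₂ := by noncomm_ring
  have q2 : (1+N₂)*(1+N₁) = 1 + N₁ + N₂ + N₂*N₁ := by noncomm_ring
  rw [q1, q2, e1, e2]

lemma layer_union {T B : Finset ι} {A A' : Mx ι} (hA : GoodLayer T A) (hA' : GoodLayer B A')
    (hd : Disjoint T B) : GoodLayer (T ∪ B) (A * A') := by
  obtain ⟨s₁, g₁, inj₁, hs₁, hg₁, hout₁, rfl⟩ := hA
  obtain ⟨s₂, g₂, inj₂, hs₂, hg₂, hout₂, rfl⟩ := hA'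
  have hss : Disjoint s₁ s₂ := hd.mono (fun x hx => hs₁ x hx) (fun x hx => hs₂ x hx)
  refine ⟨s₁ ∪ s₂, fun x => if x ∈ s₁ then g₁ x else g₂ x, ?_, ?_, ?_, ?_, ?_⟩
  · intro a ha b hb hab
    dsimp only at hab
    simp only [Finset.coe_union, Set.mem_union, Finset.mem_coe] at ha hb
    rcases ha with ha | ha <;> rcases hb with hb | hb
    · rw [if_pos ha, if_pos hb] at hab; exact inj₁ ha hb hab
    · rw [if_pos ha, if_neg (Finset.disjoint_right.mp hss hb)] at hab
      exact absurd (hab ▸ hg₁ a ha) (fun h => Finset.disjoint_left.mp hd h (hg₂ b hb))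
    · rw [if_neg (Finset.disjoint_right.mp hss ha), if_pos hb] at hab
      exact absurd (hab ▸ hg₂ a ha) (fun h => Finset.disjoint_left.mp hd (hg₁ b hb) h)
    · rw [if_neg (Finset.disjoint_right.mp hss ha), if_neg (Finset.disjoint_right.mp hss hb)] at hab
      exact inj₂ ha hb hab
  · intro x hx
    rcases Finset.mem_union.mp hx with h | h
    · exact Finset.mem_union_left _ (hs₁ x h)
    · exact Finset.mem_union_right _ (hs₂ x h)
  · intro x hx
    dsimp only
    rcases Finset.mem_union.mp hx with h | h
    · rw [if_pos h]; exact Finset.mem_union_left _ (hg₁ x h)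
    · rw [if_neg (Finset.disjoint_right.mp hss h)]; exact Finset.mem_union_right _ (hg₂ x h)
  · intro x hx hmem
    dsimp only at hmem
    rcases Finset.mem_union.mp hx with h | h
    · rw [if_pos h] at hmem
      rcases Finset.mem_union.mp hmem with h' | h'
      · exact hout₁ x h h'
      · exact Finset.disjoint_left.mp hd (hg₁ x h) (hs₂ _ h')
    · rw [if_neg (Finset.disjoint_right.mp hss h)] at hmem
      rcases Finset.mem_union.mp hmem with h' | h'
      · exact Finset.disjoint_left.mp hd (hs₁ _ h') (hg₂ x h)
      · exact hout₂ x h h'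
  · have hz : (∑ x ∈ s₁, Matrix.single x (g₁ x) (1:ZMod 2)) *
        (∑ x ∈ s₂, Matrix.single x (g₂ x) (1:ZMod 2)) = 0 := by
      refine mul_supp_zero (T := T) (B := B) ?_ ?_ hd
      · intro x y h; rw [sum_std_apply] at h
        by_cases hc : x ∈ s₁ ∧ g₁ x = y
        · exact hc.2 ▸ hg₁ x hc.1
        · simp [hc] at h
      · intro x y h; rw [sum_std_apply] at h
        by_cases hc : x ∈ s₂ ∧ g₂ x = y
        · exact hs₂ x hc.1
        · simp [hc] at h
    rw [add_mul, mul_add, mul_add, hz]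
    rw [Finset.sum_union hss]
    have e1 : ∑ x ∈ s₁, Matrix.single x (if x ∈ s₁ then g₁ x else g₂ x) (1:ZMod 2)
        = ∑ x ∈ s₁, Matrix.single x (g₁ x) (1:ZMod 2) :=
      Finset.sum_congr rfl fun x hx => by rw [if_pos hx]
    have e2 : ∑ x ∈ s₂, Matrix.single x (if x ∈ s₁ then g₁ x else g₂ x) (1:ZMod 2)
        = ∑ x ∈ s₂, Matrix.single x (g₂ x) (1:ZMod 2) :=
      Finset.sum_congr rfl fun x hx => by rw [if_neg (Finset.disjoint_right.mp hss hx)]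
    rw [e1, e2]
    noncomm_ring

def CanDo (S : Finset ι) (d : ℕ) (M : Mx ι) : Prop :=
  ∃ l : List (Mx ι), l.length ≤ d ∧ (∀ A ∈ l, GoodLayer S A) ∧ l.prod = M

lemma canDo_one (S : Finset ι) (d : ℕ) : CanDo S d (1 : Mx ι) :=
  ⟨[], by simp, by simp, by simp⟩

lemma CanDo.mono {S S' : Finset ι} {d d' : ℕ} {M : Mx ι} (h : CanDo S d M)
    (hS : S ⊆ S') (hd : d ≤ d') : CanDo S' d' M := by
  obtain ⟨l, h1, h2, h3⟩ := h
  exact ⟨l, le_trans h1 hd, fun A hA => (h2 A hA).mono hS, h3⟩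

lemma CanDo.mul {S : Finset ι} {d₁ d₂ : ℕ} {M N : Mx ι} (h : CanDo S d₁ M)
    (h' : CanDo S d₂ N) : CanDo S (d₁ + d₂) (M * N) := by
  obtain ⟨l, h1, h2, h3⟩ := h
  obtain ⟨l', h1', h2', h3'⟩ := h'
  refine ⟨l ++ l', by simp; omega, ?_, by rw [List.prod_append, h3, h3']⟩
  intro A hA
  rcases List.mem_append.mp hA with h | h
  · exact h2 A h
  · exact h2' A h

lemma CanDo.pad {S : Finset ι} {d : ℕ} {M : Mx ι} (h : CanDo S d M) :
    ∃ l : List (Mx ι), l.length = d ∧ (∀ A ∈ l, GoodLayer S A) ∧ l.prod = M := by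
  obtain ⟨l, h1, h2, h3⟩ := h
  refine ⟨l ++ List.replicate (d - l.length) 1, by simp; omega, ?_, ?_⟩
  · intro A hA
    rcases List.mem_append.mp hA with h | h
    · exact h2 A h
    · rw [List.eq_of_mem_replicate h]; exact goodLayer_one S
  · rw [List.prod_append, List.prod_replicate, one_pow, mul_one, h3]

lemma merge_aux {T B : Finset ι} (hd : Disjoint T B) :
    ∀ (l₁ l₂ : List (Mx ι)), l₁.length = l₂.length →
    (∀ A ∈ l₁, GoodLayer T A) → (∀ A ∈ l₂, GoodLayer B A) →
    ∃ l : List (Mx ι), l.length = l₁.length ∧ (∀ A ∈ l, GoodLayer (T ∪ B) A) ∧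
      l.prod = l₁.prod * l₂.prod := by
  intro l₁
  induction l₁ with
  | nil =>
    intro l₂ hlen _ _
    have : l₂ = [] := List.length_eq_zero_iff.mp (by simpa using hlen.symm)
    subst this
    exact ⟨[], by simp, by simp, by simp⟩
  | cons a l₁ ih =>
    intro l₂ hlen h₁ h₂
    cases l₂ with
    | nil => simp at hlen
    | cons b l₂ =>
      obtain ⟨l, hl1, hl2, hl3⟩ := ih l₂ (by simpa using hlen)
        (fun A hA => h₁ A (List.mem_cons_of_mem _ hA))
        (fun A hA => h₂ A (List.mem_cons_of_mem _ hA))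
      refine ⟨(a * b) :: l, by simpa using hl1, ?_, ?_⟩
      · intro A hA
        rcases List.mem_cons.mp hA with rfl | h
        · exact layer_union (h₁ a (List.mem_cons_self)) (h₂ b (List.mem_cons_self)) hd
        · exact hl2 A h
      · have hcomm : Commute b l₁.prod := by
          refine Commute.list_prod_right _ _ fun a' ha' => ?_
          exact (layer_comm (h₁ a' (List.mem_cons_of_mem _ ha')) (h₂ b (List.mem_cons_self)) hd).symm
        simp only [List.prod_cons, hl3]
        calc a * b * (l₁.prod * l₂.prod) = a * (b * l₁.prod) * l₂.prod := by simp [mul_assoc]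
          _ = a * (l₁.prod * b) * l₂.prod := by rw [hcomm.eq]
          _ = a * l₁.prod * (b * l₂.prod) := by simp [mul_assoc]

lemma CanDo.merge {T B : Finset ι} {d : ℕ} {M N : Mx ι} (h : CanDo T d M)
    (h' : CanDo B d N) (hd : Disjoint T B) : CanDo (T ∪ B) d (M * N) := by
  obtain ⟨l₁, h1, h2, h3⟩ := h.pad
  obtain ⟨l₂, h1', h2', h3'⟩ := h'.pad
  obtain ⟨l, hl1, hl2, hl3⟩ := merge_aux hd l₁ l₂ (by rw [h1, h1']) h2 h2'
  exact ⟨l, by rw [hl1, h1], hl2, by rw [hl3, h3, h3']⟩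

/-- depth bound function -/
def fdepth : ℕ → ℕ
  | 0 => 0
  | 1 => 0
  | (n+2) => fdepth ((n+3)/2) + (n+3)/2
decreasing_by omega

lemma fdepth_two_le {n : ℕ} (hn : 2 ≤ n) : fdepth n = fdepth ((n+1)/2) + (n+1)/2 := by
  obtain ⟨m, rfl⟩ : ∃ m, n = m + 2 := ⟨n - 2, by omega⟩
  rw [fdepth]

lemma fdepth0 : fdepth 0 = 0 := by rw [fdepth]
lemma fdepth1 : fdepth 1 = 0 := by rw [fdepth]
lemma fdepth2 : fdepth 2 = 1 := by rw [fdepth_two_le (by norm_num)]; norm_num [fdepth1]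
lemma fdepth3 : fdepth 3 = 3 := by rw [fdepth_two_le (by norm_num)]; norm_num [fdepth2]
lemma fdepth5 : fdepth 5 = 6 := by rw [fdepth_two_le (by norm_num)]; norm_num [fdepth3]

lemma fdepth_succ_le (n : ℕ) : fdepth n ≤ fdepth (n+1) := by
  induction n using Nat.strong_induction_on with
  | _ n ih =>
    by_cases h1 : n ≤ 1
    · interval_cases n <;> simp [fdepth0, fdepth1, fdepth2]
    · rw [fdepth_two_le (by omega), fdepth_two_le (by omega : 2 ≤ n + 1)]
      rcases (by omega : (n+1+1)/2 = (n+1)/2 ∨ (n+1+1)/2 = (n+1)/2 + 1) with h | h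
      · rw [h]
      · rw [h]
        have := ih ((n+1)/2) (by omega)
        omega

lemma fdepth_mono : Monotone fdepth := monotone_nat_of_le_succ fdepth_succ_le

lemma fdepth_bound (n : ℕ) : 3 * fdepth n ≤ 4 * n := by
  induction n using Nat.strong_induction_on with
  | _ n ih =>
    by_cases h1 : n ≤ 1
    · interval_cases n <;> simp [fdepth0, fdepth1]
    by_cases h2 : n = 3
    · subst h2; rw [fdepth3]; omega
    by_cases h3 : n = 5
    · subst h3; rw [fdepth5]; omega
    · rw [fdepth_two_le (by omega)]
      have := ih ((n+1)/2) (by omega)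
      omega

def IsOn (S : Finset ι) (M : Mx ι) : Prop :=
  ∀ x y, (x ∉ S ∨ y ∉ S) → M x y = if x = y then 1 else 0

lemma IsOn.mono {S S' : Finset ι} {M : Mx ι} (h : IsOn S M) (hS : S ⊆ S') : IsOn S' M := by
  intro x y hxy
  refine h x y ?_
  rcases hxy with h' | h'
  · exact Or.inl fun hx => h' (hS hx)
  · exact Or.inr fun hy => h' (hS hy)

lemma IsOn.mul {S : Finset ι} {M N : Mx ι} (hM : IsOn S M) (hN : IsOn S N) :
    IsOn S (M * N) := by
  intro x y hxy
  rw [Matrix.mul_apply]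
  rcases hxy with h | h
  · rw [Finset.sum_eq_single x]
    · rw [hM x x (Or.inl h)]; simp [hN x y (Or.inl h)]
    · intro z _ hz; rw [hM x z (Or.inl h), if_neg (fun he => hz he.symm), zero_mul]
    · intro hx; exact absurd (Finset.mem_univ x) hx
  · rw [Finset.sum_eq_single y]
    · rw [hN y y (Or.inr h)]; simp [hM x y (Or.inr h)]
    · intro z _ hz; rw [hN z y (Or.inr h), if_neg hz, mul_zero]
    · intro hx; exact absurd (Finset.mem_univ y) hx

section Ordered

variable [LinearOrder ι]

def LowUni (M : Mx ι) : Prop := (∀ x, M x x = 1) ∧ ∀ x y, x < y → M x y = 0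

lemma lowUni_one : LowUni (1 : Mx ι) :=
  ⟨fun x => by simp, fun x y h => by simp [Matrix.one_apply, ne_of_lt h]⟩

lemma LowUni.mul {M N : Mx ι} (hM : LowUni M) (hN : LowUni N) : LowUni (M * N) := by
  constructor
  · intro x
    rw [Matrix.mul_apply, Finset.sum_eq_single x]
    · rw [hM.1, hN.1, one_mul]
    · intro z _ hz
      rcases lt_or_gt_of_ne hz with h | h
      · rw [hN.2 z x h, mul_zero]
      · rw [hM.2 x z h, zero_mul]
    · intro hx; exact absurd (Finset.mem_univ x) hx
  · intro x y hxy
    rw [Matrix.mul_apply]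
    refine Finset.sum_eq_zero fun z _ => ?_
    by_cases h : x < z
    · rw [hM.2 x z h, zero_mul]
    · rw [hN.2 z y (lt_of_le_of_lt (not_lt.mp h) hxy), mul_zero]

end Ordered

/-- matrices supported on a single column `a` (plus contributing via `1 + P`) -/
lemma mul_colsupp {a : ι} {P N : Mx ι} (hP : ∀ x y, y ≠ a → P x y = 0) (x y : ι) :
    (P * N) x y = P x a * N a y := by
  rw [Matrix.mul_apply, Finset.sum_eq_single a]
  · intro z _ hz; rw [hP x z hz, zero_mul]
  · intro hx; exact absurd (Finset.mem_univ a) hx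

lemma rowsupp_mul {a : ι} {Q N : Mx ι} (hQ : ∀ x y, x ≠ a → Q x y = 0) (x y : ι) :
    (N * Q) x y = N x a * Q a y := by
  rw [Matrix.mul_apply, Finset.sum_eq_single a]
  · intro z _ hz; rw [hQ z y hz, mul_zero]
  · intro hx; exact absurd (Finset.mem_univ a) hx

lemma isOn_empty_eq_one {M : Mx ι} (h : IsOn (∅ : Finset ι) M) : M = 1 := by
  ext x y
  rw [h x y (Or.inl (Finset.notMem_empty x)), Matrix.one_apply]

lemma inv_exists [LinearOrder ι] (S : Finset ι) :
    ∀ M : Mx ι, IsOn S M → LowUni M →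
    ∃ N : Mx ι, IsOn S N ∧ LowUni N ∧ M * N = 1 ∧ N * M = 1 := by
  induction S using Finset.strongInductionOn with
  | _ S ih =>
  intro M h1 h2
  rcases S.eq_empty_or_nonempty with rfl | hne
  · exact ⟨1, fun x y _ => Matrix.one_apply, lowUni_one,
      by rw [isOn_empty_eq_one h1, one_mul], by rw [isOn_empty_eq_one h1, one_mul]⟩
  set a := S.min' hne with ha
  have hmem : a ∈ S := S.min'_mem hne
  have hlow : ∀ y, y < a → y ∉ S := fun y hy hyS => absurd (S.min'_le y hyS) (not_le.mpr hy)
  -- row a of M is a delta row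
  have hrow : ∀ y, y ≠ a → M a y = 0 := by
    intro y hy
    rcases lt_or_gt_of_ne hy with h | h
    · rw [h1 a y (Or.inr (hlow y h))]; simp [hy.symm]
    · exact h2.2 a y h
  set P : Mx ι := Matrix.of fun x y => if y = a ∧ x ≠ a then M x a else 0 with hPdef
  have hP : ∀ x y, y ≠ a → P x y = 0 := by
    intro x y hy; simp only [hPdef, Matrix.of_apply]; simp [hy]
  have hPa : ∀ y, P a y = 0 := by
    intro y; simp only [hPdef, Matrix.of_apply]; simp
  have hPlow : ∀ x y, ¬ (a < x) → P x y = 0 := by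
    intro x y hx
    simp only [hPdef, Matrix.of_apply]
    by_cases hc : y = a ∧ x ≠ a
    · rw [if_pos hc]
      have hxa : x < a := lt_of_le_of_ne (not_lt.mp hx) hc.2
      rw [h1 x a (Or.inl (hlow x hxa))]; simp [hc.2]
    · rw [if_neg hc]
  set M'' : Mx ι := Matrix.of fun x y => if y = a then (if x = a then 1 else 0) else M x y
    with hMdef
  have hMrow : ∀ y, M'' a y = if a = y then 1 else 0 := by
    intro y
    simp only [hMdef, Matrix.of_apply]
    by_cases hy : y = a
    · simp [hy]
    · rw [if_neg hy, hrow y hy, if_neg (fun h => hy h.symm)]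
  have hMeq : (1 + P) * M'' = M := by
    ext x y
    rw [add_mul, one_mul, Matrix.add_apply, mul_colsupp hP]
    rw [hMrow y]
    by_cases hy : y = a
    · subst hy
      simp only [hMdef, Matrix.of_apply, if_pos rfl, if_pos rfl]
      by_cases hx : x = a
      · subst hx; rw [hPa]; simp [h2.1]
      · simp only [hPdef, Matrix.of_apply]
        simp [hx]
    · simp only [hMdef, Matrix.of_apply, if_neg hy, if_neg (fun h : a = y => hy h.symm)]
      simp
  have hinvol : (1 + P) * (1 + P) = 1 := by
    have hPP : P * P = 0 := by
      ext x y; rw [mul_colsupp hP, hPa, mul_zero]; simp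
    have : (1 + P) * (1 + P) = 1 + (P + P) + P * P := by noncomm_ring
    rw [this, hPP, mx_add_self]; simp
  have hM''on : IsOn (S.erase a) M'' := by
    intro x y hxy
    simp only [hMdef, Matrix.of_apply]
    by_cases hy : y = a
    · subst hy
      rw [if_pos rfl]
    · rw [if_neg hy]
      by_cases hx : x = a
      · subst hx; rw [hrow y hy, if_neg (fun h => hy h.symm)]
      · refine h1 x y ?_
        rcases hxy with h | h
        · exact Or.inl fun hxS => h (Finset.mem_erase.mpr ⟨hx, hxS⟩)
        · exact Or.inr fun hyS => h (Finset.mem_erase.mpr ⟨hy, hyS⟩)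
  have hM''low : LowUni M'' := by
    constructor
    · intro x
      simp only [hMdef, Matrix.of_apply]
      by_cases hx : x = a <;> simp [hx, h2.1]
    · intro x y hxy
      simp only [hMdef, Matrix.of_apply]
      by_cases hy : y = a
      · subst hy; rw [if_pos rfl, if_neg (ne_of_lt hxy)]
      · rw [if_neg hy]; exact h2.2 x y hxy
  have hPS : ∀ x y, x ∉ S → P x y = 0 := by
    intro x y hx
    simp only [hPdef, Matrix.of_apply]
    by_cases hc : y = a ∧ x ≠ a
    · rw [if_pos hc, h1 x a (Or.inl hx), if_neg hc.2]
    · rw [if_neg hc]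
  have hPon : IsOn S (1 + P) := by
    intro x y hxy
    rw [Matrix.add_apply, Matrix.one_apply]
    rcases hxy with h | h
    · rw [hPS x y h]; simp
    · rw [hP x y (fun hya => h (hya ▸ hmem))]; simp
  have hPlow' : LowUni (1 + P) := by
    constructor
    · intro x
      rw [Matrix.add_apply, Matrix.one_apply_eq]
      simp only [hPdef, Matrix.of_apply]; simp
    · intro x y hxy
      rw [Matrix.add_apply, Matrix.one_apply_ne (ne_of_lt hxy)]
      by_cases hy : y = a
      · rw [hPS x y (hlow x (hy ▸ hxy))]; simp
      · rw [hP x y hy]; simp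
  have hsub : S.erase a ⊂ S := Finset.erase_ssubset hmem
  obtain ⟨N'', hN1, hN2, hN3, hN4⟩ := ih (S.erase a) hsub M'' hM''on hM''low
  refine ⟨N'' * (1 + P), (hN1.mono (Finset.erase_subset a S)).mul hPon,
    hN2.mul hPlow', ?_, ?_⟩
  · calc M * (N'' * (1 + P)) = ((1 + P) * M'') * (N'' * (1 + P)) := by rw [hMeq]
      _ = (1 + P) * (M'' * N'') * (1 + P) := by noncomm_ring
      _ = 1 := by rw [hN3, mul_one, hinvol]
  · calc (N'' * (1 + P)) * M = N'' * ((1 + P) * (1 + P)) * M'' := by rw [← hMeq]; noncomm_ring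
      _ = 1 := by rw [hinvol, mul_one, hN4]

lemma mul_list_sum_zero (N : Mx ι) : ∀ l : List (Mx ι), (∀ Q ∈ l, N * Q = 0) →
    N * l.sum = 0 := by
  intro l
  induction l with
  | nil => simp
  | cons Q l ih =>
    intro h
    rw [List.sum_cons, mul_add, h Q (List.mem_cons_self),
      ih (fun Q' hQ' => h Q' (List.mem_cons_of_mem _ hQ')), add_zero]

lemma prod_one_add : ∀ l : List (Mx ι), (∀ P ∈ l, ∀ Q ∈ l, P * Q = 0) →
    (l.map (fun N => 1 + N)).prod = 1 + l.sum := by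
  intro l
  induction l with
  | nil => simp
  | cons N l ih =>
    intro h
    simp only [List.map_cons, List.prod_cons, List.sum_cons]
    rw [ih (fun P hP Q hQ => h P (List.mem_cons_of_mem _ hP) Q (List.mem_cons_of_mem _ hQ))]
    have hNl : N * l.sum = 0 :=
      mul_list_sum_zero N l (fun Q hQ => h N (List.mem_cons_self) Q (List.mem_cons_of_mem _ hQ))
    have : (1 + N) * (1 + l.sum) = 1 + (N + l.sum) + N * l.sum := by noncomm_ring
    rw [this, hNl, add_zero]

lemma shift_canDo {h : ℕ} (hpos : 0 < h) (t : Fin h → ι) (ht : Function.Injective t)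
    (B : Finset ι) (bi : ι → Fin h) (hbi : Set.InjOn bi B)
    (hdis : ∀ k, t k ∉ B)
    (X : Mx ι) (hX : ∀ x y, X x y ≠ 0 → x ∈ B ∧ ∃ k, y = t k) :
    CanDo (B ∪ Finset.univ.image t) h (1 + X) := by
  classical
  haveI : NeZero h := ⟨hpos.ne'⟩
  set N : Fin h → Mx ι := fun s => Matrix.of fun x y =>
    if x ∈ B ∧ y = t (bi x + s) ∧ X x y = 1 then 1 else 0 with hNdef
  have hNrow : ∀ s x y, (N s) x y ≠ 0 → x ∈ B := by
    intro s x y hxy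
    simp only [hNdef, Matrix.of_apply] at hxy
    by_cases hc : x ∈ B ∧ y = t (bi x + s) ∧ X x y = 1
    · exact hc.1
    · rw [if_neg hc] at hxy; exact absurd rfl hxy
  have hNcol : ∀ s x y, (N s) x y ≠ 0 → ∃ k, y = t k := by
    intro s x y hxy
    simp only [hNdef, Matrix.of_apply] at hxy
    by_cases hc : x ∈ B ∧ y = t (bi x + s) ∧ X x y = 1
    · exact ⟨_, hc.2.1⟩
    · rw [if_neg hc] at hxy; exact absurd rfl hxy
  have hNN : ∀ s s', N s * N s' = 0 := by
    intro s s'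
    refine mul_supp_zero (T := Finset.univ.image t) (B := B) ?_ ?_ ?_
    · intro x y hxy
      obtain ⟨k, rfl⟩ := hNcol s x y hxy
      exact Finset.mem_image_of_mem t (Finset.mem_univ k)
    · intro x y hxy; exact hNrow s' x y hxy
    · rw [Finset.disjoint_left]
      intro z hz
      obtain ⟨k, _, rfl⟩ := Finset.mem_image.mp hz
      exact hdis k
  refine ⟨List.ofFn (fun s => 1 + N s), by simp, ?_, ?_⟩
  · intro A hA
    obtain ⟨s, rfl⟩ := List.mem_ofFn.mp hA
    refine ⟨B.filter (fun x => X x (t (bi x + s)) = 1), fun x => t (bi x + s),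
      ?_, ?_, ?_, ?_, ?_⟩
    · intro x hx y hy hxy
      simp only [Finset.coe_filter, Set.mem_setOf_eq] at hx hy
      have := ht hxy
      have := add_right_cancel this
      exact hbi hx.1 hy.1 this
    · intro x hx; exact Finset.mem_union_left _ (Finset.mem_of_mem_filter x hx)
    · intro x _; exact Finset.mem_union_right _ (Finset.mem_image_of_mem t (Finset.mem_univ _))
    · intro x hx hmem
      exact hdis (bi x + s) (Finset.mem_of_mem_filter _ hmem)
    · show (1 + N s) = _
      congr 1
      ext a b
      rw [sum_std_apply]
      simp only [hNdef, Matrix.of_apply, Finset.mem_filter]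
      by_cases hc : a ∈ B ∧ b = t (bi a + s) ∧ X a b = 1
      · rw [if_pos hc, if_pos ⟨⟨hc.1, hc.2.1 ▸ hc.2.2⟩, hc.2.1.symm⟩]
      · rw [if_neg hc, if_neg ?_]
        rintro ⟨⟨haB, hXa⟩, hb⟩
        exact hc ⟨haB, hb.symm, hb ▸ hXa⟩
  · rw [show (List.ofFn fun s => 1 + N s) = (List.ofFn N).map (fun A => 1 + A) by
      rw [List.map_ofFn]; rfl]
    rw [prod_one_add _ ?_]
    · congr 1
      rw [List.sum_ofFn]
      ext a b
      rw [Matrix.sum_apply]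
      simp only [hNdef, Matrix.of_apply]
      by_cases hab : X a b = 0
      · rw [hab]
        refine Finset.sum_eq_zero fun s _ => ?_
        rw [if_neg]
        rintro ⟨_, _, h1⟩
        exact zero_ne_one h1
      · obtain ⟨haB, k, rfl⟩ := hX a b hab
        have hab1 : X a (t k) = 1 := by
          rcases zmod2_eq01 (X a (t k)) with h | h
          · exact absurd h hab
          · exact h
        have hcong : ∀ s : Fin h, (if a ∈ B ∧ t k = t (bi a + s) ∧ X a (t k) = 1 then (1:ZMod 2) else 0)
            = if s = k - bi a then 1 else 0 := by
          intro s
          by_cases hs : s = k - bi a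
          · subst hs
            rw [if_pos ⟨haB, by rw [show bi a + (k - bi a) = k from by abel], hab1⟩, if_pos rfl]
          · rw [if_neg ?_, if_neg hs]
            rintro ⟨_, hk, _⟩
            refine hs ?_
            have h' := ht hk
            rw [h']; abel
        rw [Finset.sum_congr rfl (fun s _ => hcong s), Finset.sum_ite_eq' Finset.univ (k - bi a)]
        rw [if_pos (Finset.mem_univ _), hab1]
    · intro P hP Q hQ
      obtain ⟨s, rfl⟩ := List.mem_ofFn.mp hP
      obtain ⟨s', rfl⟩ := List.mem_ofFn.mp hQ
      exact hNN s s'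

theorem diag_canDo [LinearOrder ι] (S : Finset ι) :
    ∀ M : Mx ι, IsOn S M → LowUni M → CanDo S (fdepth S.card) M := by
  induction S using Finset.strongInductionOn with
  | _ S ih =>
  intro M h1 h2
  by_cases hn1 : S.card ≤ 1
  · have hM : M = 1 := by
      ext x y
      by_cases hxy : x = y
      · subst hxy; rw [h2.1, Matrix.one_apply_eq]
      · have hout : x ∉ S ∨ y ∉ S := by
          by_contra hcon
          push_neg at hcon
          exact hxy (Finset.card_le_one.mp hn1 x hcon.1 y hcon.2)
        rw [Matrix.one_apply_ne hxy, h1 x y hout, if_neg hxy]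
    rw [hM]; exact canDo_one S _
  push_neg at hn1
  set n := S.card with hn
  set h := (n+1)/2 with hhdef
  have hh : h ≤ n := by omega
  have hpos : 0 < h := by omega
  have hnh : n - h ≤ h := by omega
  set iso := S.orderIsoOfFin rfl with hiso
  set t : Fin h → ι := fun k => (iso (Fin.castLE hh k) : ι) with htdef
  have ht : Function.Injective t := by
    intro k k' hk
    have := iso.injective (Subtype.ext hk)
    exact Fin.castLE_injective hh this
  set T : Finset ι := Finset.univ.image t with hTdef
  have hTS : T ⊆ S := by
    intro x hx
    obtain ⟨k, _, rfl⟩ := Finset.mem_image.mp hx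
    exact (iso (Fin.castLE hh k)).2
  have hTcard : T.card = h := by
    rw [hTdef, Finset.card_image_of_injective _ ht, Finset.card_univ, Fintype.card_fin]
  set B : Finset ι := S \ T with hBdef
  have hBS : B ⊆ S := Finset.sdiff_subset
  have hdisj : Disjoint T B := Finset.disjoint_sdiff
  have hBcard : B.card = n - h := by rw [hBdef, Finset.card_sdiff_of_subset hTS, hTcard]
  have hST : ∀ x ∈ S, x ∈ T ∨ x ∈ B := by
    intro x hx
    by_cases hxT : x ∈ T
    · exact Or.inl hxT
    · exact Or.inr (Finset.mem_sdiff.mpr ⟨hx, hxT⟩)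
  -- index of an element of B is at least h
  have hidx : ∀ x, ∀ hx : x ∈ B, h ≤ (iso.symm ⟨x, hBS hx⟩ : Fin n).val := by
    intro x hx
    by_contra hcon
    push_neg at hcon
    have hxT : x ∈ T := by
      rw [hTdef]
      refine Finset.mem_image.mpr ⟨⟨(iso.symm ⟨x, hBS hx⟩ : Fin n).val, hcon⟩, Finset.mem_univ _, ?_⟩
      rw [htdef]
      have : Fin.castLE hh ⟨(iso.symm ⟨x, hBS hx⟩ : Fin n).val, hcon⟩ = iso.symm ⟨x, hBS hx⟩ := by
        apply Fin.ext; rfl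
      show (iso (Fin.castLE hh ⟨(iso.symm ⟨x, hBS hx⟩ : Fin n).val, hcon⟩) : ι) = x
      rw [this]
      simp
    exact (Finset.mem_sdiff.mp hx).2 hxT
  have hTB_lt : ∀ y ∈ T, ∀ x ∈ B, y < x := by
    intro y hy x hx
    obtain ⟨k, _, rfl⟩ := Finset.mem_image.mp hy
    have hxS : x ∈ S := hBS hx
    have hx_eq : (iso (iso.symm ⟨x, hxS⟩) : ι) = x := by simp
    rw [← hx_eq]
    have hlt : (Fin.castLE hh k) < (iso.symm ⟨x, hxS⟩ : Fin n) := by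
      have h1 := hidx x hx
      have h2 : (Fin.castLE hh k).val < h := k.2
      exact Fin.lt_def.mpr (by omega)
    exact iso.strictMono hlt
  set bi : ι → Fin h := fun x => if hx : x ∈ B then
      ⟨(iso.symm ⟨x, hBS hx⟩ : Fin n).val - h, by have := hidx x hx; have := (iso.symm ⟨x, hBS hx⟩ : Fin n).2; omega⟩
    else ⟨0, hpos⟩ with hbidef
  have hbi : Set.InjOn bi B := by
    intro x hx y hy hxy
    simp only [Finset.mem_coe] at hx hy
    rw [hbidef] at hxy
    simp only [dif_pos hx, dif_pos hy] at hxy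
    have h1 := hidx x hx
    have h2 := hidx y hy
    have : (iso.symm ⟨x, hBS hx⟩ : Fin n).val = (iso.symm ⟨y, hBS hy⟩ : Fin n).val := by
      have hv : (iso.symm ⟨x, hBS hx⟩ : Fin n).val - h = (iso.symm ⟨y, hBS hy⟩ : Fin n).val - h :=
        congrArg Fin.val hxy
      omega
    have h3 := iso.symm.injective (Fin.ext this)
    exact congrArg Subtype.val h3
  set Ae : Mx ι := Matrix.of fun x y => if x ∈ T ∧ y ∈ T then M x y else (if x = y then 1 else 0) with hAedef
  set De : Mx ι := Matrix.of fun x y => if x ∈ B ∧ y ∈ B then M x y else (if x = y then 1 else 0) with hDedef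
  set C : Mx ι := Matrix.of fun x y => if x ∈ B ∧ y ∈ T then M x y else 0 with hCdef
  have hAeOn : IsOn T Ae := by
    intro x y hxy
    simp only [hAedef, Matrix.of_apply]
    rw [if_neg (by tauto)]
  have hDeOn : IsOn B De := by
    intro x y hxy
    simp only [hDedef, Matrix.of_apply]
    rw [if_neg (by tauto)]
  have hAeLow : LowUni Ae := by
    constructor
    · intro x
      simp only [hAedef, Matrix.of_apply]
      by_cases hx : x ∈ T ∧ x ∈ T
      · rw [if_pos hx, h2.1]
      · rw [if_neg hx]; simp
    · intro x y hxy
      simp only [hAedef, Matrix.of_apply]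
      by_cases hx : x ∈ T ∧ y ∈ T
      · rw [if_pos hx, h2.2 x y hxy]
      · rw [if_neg hx, if_neg (ne_of_lt hxy)]
  have hDeLow : LowUni De := by
    constructor
    · intro x
      simp only [hDedef, Matrix.of_apply]
      by_cases hx : x ∈ B ∧ x ∈ B
      · rw [if_pos hx, h2.1]
      · rw [if_neg hx]; simp
    · intro x y hxy
      simp only [hDedef, Matrix.of_apply]
      by_cases hx : x ∈ B ∧ y ∈ B
      · rw [if_pos hx, h2.2 x y hxy]
      · rw [if_neg hx, if_neg (ne_of_lt hxy)]
  obtain ⟨D', hD'on, hD'low, hDD', hD'D⟩ := inv_exists B De hDeOn hDeLow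
  set X : Mx ι := D' * C with hXdef
  have hCsupp : ∀ x y, C x y ≠ 0 → x ∈ B ∧ y ∈ T := by
    intro x y hxy
    by_cases hc : x ∈ B ∧ y ∈ T
    · exact hc
    · exfalso; apply hxy; simp only [hCdef, Matrix.of_apply]; rw [if_neg hc]
  have hXsupp : ∀ x y, X x y ≠ 0 → x ∈ B ∧ ∃ k, y = t k := by
    intro x y hxy
    constructor
    · by_contra hxB
      apply hxy
      rw [hXdef, Matrix.mul_apply]
      have : ∀ z, D' x z * C z y = (if x = z then 1 else 0) * C z y := by
        intro z; rw [hD'on x z (Or.inl hxB)]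
      rw [Finset.sum_congr rfl (fun z _ => this z)]
      rw [Finset.sum_eq_single x]
      · rw [if_pos rfl, one_mul]
        by_cases hc : C x y = 0
        · exact hc
        · exact absurd (hCsupp x y hc).1 hxB
      · intro z _ hz; rw [if_neg (fun he => hz he.symm), zero_mul]
      · intro hx; exact absurd (Finset.mem_univ x) hx
    · -- y must be in T
      by_contra hyT
      apply hxy
      rw [hXdef, Matrix.mul_apply]
      refine Finset.sum_eq_zero fun z _ => ?_
      have : C z y = 0 := by
        by_cases hc : C z y = 0
        · exact hc
        · exfalso
          obtain ⟨k, _, hk⟩ := Finset.mem_image.mp (hCsupp z y hc).2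
          exact hyT ⟨k, hk.symm⟩
      rw [this, mul_zero]
  have hAeC : Ae * C = C := by
    ext x y
    rw [Matrix.mul_apply, Finset.sum_eq_single x]
    · rw [hAeLow.1, one_mul]
    · intro z _ hz
      by_cases hzB : z ∈ B
      · have hzT : z ∉ T := Finset.disjoint_right.mp hdisj hzB
        simp only [hAedef, Matrix.of_apply]
        rw [if_neg (by tauto), if_neg (fun he => hz he.symm), zero_mul]
      · have : C z y = 0 := by
          by_cases hc : C z y = 0
          · exact hc
          · exact absurd (hCsupp z y hc).1 hzB
        rw [this, mul_zero]
    · intro hx; exact absurd (Finset.mem_univ x) hx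
  have hmain : M = Ae * De * (1 + X) := by
    have hDX : De * X = C := by
      rw [hXdef, ← mul_assoc, hDD', one_mul]
    have step : Ae * De * (1 + X) = Ae * De + C := by
      rw [mul_add, mul_one, mul_assoc, hDX, hAeC]
    rw [step]
    -- the entrywise identity
    ext x y
    rw [Matrix.add_apply, Matrix.mul_apply]
    by_cases hyT : y ∈ T
    · have hyB : y ∉ B := Finset.disjoint_left.mp hdisj hyT
      rw [Finset.sum_eq_single y]
      · have hDyy : De y y = 1 := by
          simp only [hDedef, Matrix.of_apply]; rw [if_neg (by tauto)]; simp
        rw [hDyy, mul_one]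
        have hyT' := hyT
        by_cases hxT : x ∈ T
        · have hxB : x ∉ B := Finset.disjoint_left.mp hdisj hxT
          simp only [hAedef, hCdef, Matrix.of_apply]
          rw [if_pos ⟨hxT, hyT⟩, if_neg (by tauto), add_zero]
        · by_cases hxB : x ∈ B
          · have hxy : x ≠ y := fun he => hyB (he ▸ hxB)
            simp only [hAedef, hCdef, Matrix.of_apply]
            rw [if_neg (by tauto), if_neg hxy, if_pos ⟨hxB, hyT⟩, zero_add]
          · have hxS : x ∉ S := fun hxS => (hST x hxS).elim hxT hxB
            have hxy : x ≠ y := fun he => hxS (he ▸ hTS hyT)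
            simp only [hAedef, hCdef, Matrix.of_apply]
            rw [if_neg (by tauto), if_neg hxy, if_neg (by tauto), add_zero,
              h1 x y (Or.inl hxS), if_neg hxy]
      · intro z _ hz
        have : De z y = 0 := by
          simp only [hDedef, Matrix.of_apply]
          rw [if_neg (by tauto), if_neg hz]
        rw [this, mul_zero]
      · intro hx; exact absurd (Finset.mem_univ y) hx
    · have hC0 : C x y = 0 := by
        simp only [hCdef, Matrix.of_apply]; rw [if_neg (by tauto)]
      rw [hC0, add_zero]
      by_cases hxT : x ∈ T
      · -- entry should be 0 and M x y = 0
        rw [Finset.sum_eq_zero]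
        · by_cases hyB : y ∈ B
          · exact h2.2 x y (hTB_lt x hxT y hyB)
          · have hyS : y ∉ S := fun hyS => (hST y hyS).elim hyT hyB
            have hxy : x ≠ y := fun he => hyS (he ▸ hTS hxT)
            rw [h1 x y (Or.inr hyS), if_neg hxy]
        · intro z _
          by_cases hzT : z ∈ T
          · have : De z y = 0 := by
              have hzB : z ∉ B := Finset.disjoint_left.mp hdisj hzT
              have hzy : z ≠ y := fun he => hyT (he ▸ hzT)
              simp only [hDedef, Matrix.of_apply]
              rw [if_neg (by tauto), if_neg hzy]
            rw [this, mul_zero]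
          · have : Ae x z = 0 := by
              have hxz : x ≠ z := fun he => hzT (he ▸ hxT)
              simp only [hAedef, Matrix.of_apply]
              rw [if_neg (by tauto), if_neg hxz]
            rw [this, zero_mul]
      · rw [Finset.sum_eq_single x]
        · have hAxx : Ae x x = 1 := by
            simp only [hAedef, Matrix.of_apply]; rw [if_neg (by tauto)]; simp
          rw [hAxx, one_mul]
          by_cases hxB : x ∈ B
          · by_cases hyB : y ∈ B
            · simp only [hDedef, Matrix.of_apply]; rw [if_pos ⟨hxB, hyB⟩]
            · have hyS : y ∉ S := fun hyS => (hST y hyS).elim hyT hyB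
              have hxy : x ≠ y := fun he => hyS (he ▸ hBS hxB)
              simp only [hDedef, Matrix.of_apply]
              rw [if_neg (by tauto), h1 x y (Or.inr hyS)]
          · have hxS : x ∉ S := fun hxS => (hST x hxS).elim hxT hxB
            simp only [hDedef, Matrix.of_apply]
            rw [if_neg (by tauto), h1 x y (Or.inl hxS)]
        · intro z _ hz
          have : Ae x z = 0 := by
            simp only [hAedef, Matrix.of_apply]
            rw [if_neg (by tauto), if_neg (fun he => hz he.symm)]
          rw [this, zero_mul]
        · intro hx; exact absurd (Finset.mem_univ x) hx
  -- recursion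
  have hBne : B.Nonempty := Finset.card_pos.mp (by omega)
  have hTsub : T ⊂ S := by
    refine Finset.ssubset_iff_of_subset hTS |>.mpr ?_
    obtain ⟨b, hb⟩ := hBne
    exact ⟨b, hBS hb, Finset.disjoint_right.mp hdisj hb⟩
  have hBsub : B ⊂ S := by
    refine Finset.ssubset_iff_of_subset hBS |>.mpr ?_
    refine ⟨t ⟨0, hpos⟩, hTS (Finset.mem_image_of_mem t (Finset.mem_univ _)), ?_⟩
    exact Finset.disjoint_left.mp hdisj (Finset.mem_image_of_mem t (Finset.mem_univ _))
  have cT : CanDo T (fdepth h) Ae := by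
    have := ih T hTsub Ae hAeOn hAeLow
    rwa [hTcard] at this
  have cB : CanDo B (fdepth h) De := by
    have := ih B hBsub De hDeOn hDeLow
    rw [hBcard] at this
    exact this.mono (le_refl _) (fdepth_mono hnh)
  have cAD : CanDo S (fdepth h) (Ae * De) :=
    (cT.merge cB hdisj).mono (Finset.union_subset hTS hBS) (le_refl _)
  have cX : CanDo S h (1 + X) := by
    have hdis : ∀ k, t k ∉ B := fun k =>
      Finset.disjoint_left.mp hdisj (Finset.mem_image_of_mem t (Finset.mem_univ _))
    have := shift_canDo hpos t ht B bi hbi hdis X hXsupp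
    refine this.mono ?_ (le_refl _)
    rw [← hTdef]
    exact Finset.union_subset hBS hTS
  have : CanDo S (fdepth h + h) M := by
    rw [hmain]
    exact cAD.mul cX
  rwa [← fdepth_two_le hn1] at this

lemma IsOn.transpose {S : Finset ι} {M : Mx ι} (h : IsOn S M) : IsOn S Mᵀ := by
  intro x y hxy
  rw [Matrix.transpose_apply, h y x (Or.symm hxy)]
  by_cases hx : x = y
  · subst hx; simp
  · rw [if_neg hx, if_neg (fun he => hx he.symm)]

lemma transpose_list_prod' : ∀ l : List (Mx ι), (l.prod)ᵀ = ((l.map Matrix.transpose).reverse).prod := by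
  intro l
  induction l with
  | nil => simp
  | cons a l ih =>
    simp only [List.prod_cons, Matrix.transpose_mul, List.map_cons, List.reverse_cons]
    rw [ih, List.prod_append, List.prod_cons, List.prod_nil, mul_one]

lemma GoodLayer.transpose {S : Finset ι} {A : Mx ι} (h : GoodLayer S A) : GoodLayer S Aᵀ := by
  classical
  obtain ⟨s, g, hinj, hs, hgs, hout, rfl⟩ := h
  rcases s.eq_empty_or_nonempty with rfl | hne
  · simp only [Finset.sum_empty, add_zero, Matrix.transpose_one]
    exact goodLayer_one S
  haveI : Nonempty ι := ⟨hne.choose⟩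
  refine ⟨s.image g, Function.invFunOn g s, ?_, ?_, ?_, ?_, ?_⟩
  · intro y₁ hy₁ y₂ hy₂ he
    simp only [Finset.coe_image, Set.mem_image, Finset.mem_coe] at hy₁ hy₂
    obtain ⟨x₁, hx₁, rfl⟩ := hy₁
    obtain ⟨x₂, hx₂, rfl⟩ := hy₂
    rw [hinj.leftInvOn_invFunOn hx₁, hinj.leftInvOn_invFunOn hx₂] at he
    rw [he]
  · intro y hy
    obtain ⟨x, hx, rfl⟩ := Finset.mem_image.mp hy
    exact hgs x hx
  · intro y hy
    obtain ⟨x, hx, rfl⟩ := Finset.mem_image.mp hy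
    rw [hinj.leftInvOn_invFunOn hx]
    exact hs x hx
  · intro y hy hmem
    obtain ⟨x, hx, rfl⟩ := Finset.mem_image.mp hy
    rw [hinj.leftInvOn_invFunOn hx] at hmem
    obtain ⟨z, hz, hzz⟩ := Finset.mem_image.mp hmem
    exact hout z hz (hzz ▸ hx)
  · rw [Matrix.transpose_add, Matrix.transpose_one]
    congr 1
    rw [Matrix.transpose_sum]
    rw [Finset.sum_image (fun x hx y hy he => hinj hx hy he)]
    refine Finset.sum_congr rfl fun x hx => ?_
    rw [hinj.leftInvOn_invFunOn hx]
    ext u v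
    simp [Matrix.single, Matrix.transpose_apply, and_comm]

lemma CanDo.transpose {S : Finset ι} {d : ℕ} {M : Mx ι} (h : CanDo S d M) : CanDo S d Mᵀ := by
  obtain ⟨l, h1, h2, h3⟩ := h
  refine ⟨(l.map Matrix.transpose).reverse, by simpa using h1, ?_, ?_⟩
  · intro A hA
    rw [List.mem_reverse, List.mem_map] at hA
    obtain ⟨B, hB, rfl⟩ := hA
    exact (h2 B hB).transpose
  · rw [← transpose_list_prod', h3]

section Upper

variable [LinearOrder ι]

def UpUni (M : Mx ι) : Prop := LowUni Mᵀ

lemma upUni_one : UpUni (1 : Mx ι) := by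
  rw [UpUni, Matrix.transpose_one]; exact lowUni_one

lemma UpUni.mul {M N : Mx ι} (hM : UpUni M) (hN : UpUni N) : UpUni (M * N) := by
  rw [UpUni, Matrix.transpose_mul]
  exact LowUni.mul hN hM

lemma UpUni.diag {M : Mx ι} (hM : UpUni M) (x : ι) : M x x = 1 := hM.1 x

lemma UpUni.off {M : Mx ι} (hM : UpUni M) {x y : ι} (h : y < x) : M x y = 0 := hM.2 y x h

lemma upUni_of {M : Mx ι} (hd : ∀ x, M x x = 1) (ho : ∀ x y, y < x → M x y = 0) : UpUni M :=
  ⟨fun x => hd x, fun x y hxy => ho y x hxy⟩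

lemma inv_exists_up (S : Finset ι) (M : Mx ι) (h1 : IsOn S M) (h2 : UpUni M) :
    ∃ N : Mx ι, IsOn S N ∧ UpUni N ∧ M * N = 1 ∧ N * M = 1 := by
  obtain ⟨N, hN1, hN2, hN3, hN4⟩ := inv_exists S Mᵀ h1.transpose h2
  refine ⟨Nᵀ, hN1.transpose, ?_, ?_, ?_⟩
  · rw [UpUni, Matrix.transpose_transpose]; exact hN2
  · have := congrArg Matrix.transpose hN4
    rwa [Matrix.transpose_mul, Matrix.transpose_transpose, Matrix.transpose_one] at this
  · have := congrArg Matrix.transpose hN3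
    rwa [Matrix.transpose_mul, Matrix.transpose_transpose, Matrix.transpose_one] at this

theorem diag_canDo_up (S : Finset ι) (M : Mx ι) (h1 : IsOn S M) (h2 : UpUni M) :
    CanDo S (fdepth S.card) M := by
  have := (diag_canDo S Mᵀ h1.transpose h2).transpose
  rwa [Matrix.transpose_transpose] at this

end Upper

theorem ulu [LinearOrder ι] (S : Finset ι) :
    ∀ M : Mx ι, IsOn S M → (∃ N : Mx ι, M * N = 1 ∧ N * M = 1) →
    ∃ U₁ L U₂ : Mx ι, IsOn S U₁ ∧ IsOn S L ∧ IsOn S U₂ ∧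
      UpUni U₁ ∧ LowUni L ∧ UpUni U₂ ∧ M = U₁ * L * U₂ := by
  induction S using Finset.strongInductionOn with
  | _ S ih =>
  intro M h1 hinv
  rcases S.eq_empty_or_nonempty with rfl | hne
  · refine ⟨1, 1, 1, ?_, ?_, ?_, upUni_one, lowUni_one, upUni_one, ?_⟩ <;>
      first
      | (intro x y _; rw [Matrix.one_apply])
      | rw [isOn_empty_eq_one h1]; simp
  obtain ⟨N, hMN, hNM⟩ := hinv
  set a := S.min' hne with ha
  have hmem : a ∈ S := S.min'_mem hne
  have hlow : ∀ y, y < a → y ∉ S := fun y hy hyS => absurd (S.min'_le y hyS) (not_le.mpr hy)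
  -- the column a of M is nonzero somewhere on S
  have hcol : ∃ i ∈ S, M i a ≠ 0 := by
    by_contra hcon
    push_neg at hcon
    have : (N * M) a a = 0 := by
      rw [Matrix.mul_apply]
      refine Finset.sum_eq_zero fun z _ => ?_
      by_cases hz : z ∈ S
      · rw [hcon z hz, mul_zero]
      · have hza : z ≠ a := fun he => hz (he ▸ hmem)
        rw [h1 z a (Or.inl hz), if_neg hza, mul_zero]
    rw [hNM, Matrix.one_apply_eq] at this
    exact one_ne_zero this
  -- a pivoting upper unitriangular involution V₀ with (V₀ * M) a a = 1
  obtain ⟨V₀, hV₀up, hV₀on, hV₀inv, hV₀aa⟩ :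
      ∃ V₀ : Mx ι, UpUni V₀ ∧ IsOn S V₀ ∧ V₀ * V₀ = 1 ∧ (V₀ * M) a a = 1 := by
    by_cases hMaa : M a a = 1
    · exact ⟨1, upUni_one, fun x y _ => Matrix.one_apply, by simp, by simp [hMaa]⟩
    · obtain ⟨i, hiS, hMia⟩ := hcol
      have hMia1 : M i a = 1 := (zmod2_eq01 (M i a)).resolve_left hMia
      have hia : i ≠ a := by
        rintro rfl
        exact hMaa hMia1
      have hai : a < i := lt_of_le_of_ne (S.min'_le i hiS) (fun he => hia he.symm)
      have hEmul : ∀ Mtx : Mx ι, ∀ x y, (Matrix.single a i (1 : ZMod 2) * Mtx) x y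
          = if x = a then Mtx i y else 0 := by
        intro Mtx x y
        rw [Matrix.mul_apply, Finset.sum_eq_single i]
        · by_cases hx : x = a
          · subst hx; simp [Matrix.single]
          · have hx' : a ≠ x := fun h => hx h.symm
            simp [Matrix.single, hx, hx']
        · intro z _ hz
          have hz' : i ≠ z := fun h => hz h.symm
          simp [Matrix.single, hz']
        · intro hx; exact absurd (Finset.mem_univ i) hx
      refine ⟨1 + Matrix.single a i 1, ?_, ?_, ?_, ?_⟩
      · refine upUni_of (fun x => ?_) (fun x y hxy => ?_)
        · rw [Matrix.add_apply, Matrix.one_apply_eq]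
          have hax : ¬(a = x ∧ i = x) := by rintro ⟨rfl, rfl⟩; exact hia rfl
          simp [Matrix.single, hax]
        · rw [Matrix.add_apply, Matrix.one_apply_ne (ne_of_gt hxy)]
          have : ¬(a = x ∧ i = y) := by
            rintro ⟨rfl, rfl⟩
            exact absurd (lt_trans hxy hai) (lt_irrefl _)
          simp [Matrix.single, this]
      · intro x y hxy
        rw [Matrix.add_apply, Matrix.one_apply]
        have : ¬(a = x ∧ i = y) := by
          rintro ⟨rfl, rfl⟩
          rcases hxy with h | h
          · exact h hmem
          · exact h hiS
        simp [Matrix.single, this]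
      · have hEE : Matrix.single a i (1 : ZMod 2) * Matrix.single a i 1 = 0 := by
          ext x y
          rw [hEmul]
          by_cases hx : x = a
          · subst hx
            have hai' : a ≠ i := fun h => hia h.symm
            simp [Matrix.single, hai']
          · simp [hx]
        have : (1 + Matrix.single a i (1:ZMod 2)) * (1 + Matrix.single a i 1)
            = 1 + (Matrix.single a i 1 + Matrix.single a i 1)
              + Matrix.single a i 1 * Matrix.single a i 1 := by noncomm_ring
        rw [this, hEE, mx_add_self]
        simp
      · rw [add_mul, one_mul, Matrix.add_apply, hEmul]
        rcases zmod2_eq01 (M a a) with h | h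
        · rw [h, if_pos rfl, hMia1, zero_add]
        · exact absurd h hMaa
  set M₁ : Mx ι := V₀ * M with hM₁def
  have hM₁on : IsOn S M₁ := hV₀on.mul h1
  have hM₁aa : M₁ a a = 1 := hV₀aa
  -- clear the column below a
  set P : Mx ι := Matrix.of fun x y => if y = a ∧ x ≠ a ∧ M₁ x a = 1 then 1 else 0 with hPdef
  have hP : ∀ x y, y ≠ a → P x y = 0 := by
    intro x y hy; simp only [hPdef, Matrix.of_apply]; simp [hy]
  have hPa : ∀ y, P a y = 0 := by
    intro y; simp only [hPdef, Matrix.of_apply]; simp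
  have hPS : ∀ x y, x ∉ S → P x y = 0 := by
    intro x y hx
    simp only [hPdef, Matrix.of_apply]
    rw [if_neg]
    rintro ⟨rfl, hxa, hx1⟩
    rw [hM₁on x a (Or.inl hx), if_neg hxa] at hx1
    exact zero_ne_one hx1
  have hPP : P * P = 0 := by
    ext x y; rw [mul_colsupp hP, hPa, mul_zero]; simp
  set L₁ : Mx ι := 1 + P with hL₁def
  have hL₁low : LowUni L₁ := by
    constructor
    · intro x
      rw [hL₁def, Matrix.add_apply, Matrix.one_apply_eq]
      have hPxx : P x x = 0 := by
        simp only [hPdef, Matrix.of_apply]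
        rw [if_neg]; rintro ⟨rfl, hxa, _⟩; exact hxa rfl
      rw [hPxx, add_zero]
    · intro x y hxy
      rw [hL₁def, Matrix.add_apply, Matrix.one_apply_ne (ne_of_lt hxy)]
      by_cases hy : y = a
      · rw [hPS x y (hlow x (hy ▸ hxy))]; simp
      · rw [hP x y hy]; simp
  have hL₁on : IsOn S L₁ := by
    intro x y hxy
    rw [hL₁def, Matrix.add_apply, Matrix.one_apply]
    rcases hxy with h | h
    · rw [hPS x y h]; simp
    · rw [hP x y (fun hya => h (hya ▸ hmem))]; simp
  have hL₁inv : L₁ * L₁ = 1 := by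
    rw [hL₁def]
    have : (1 + P) * (1 + P) = 1 + (P + P) + P * P := by noncomm_ring
    rw [this, hPP, mx_add_self]; simp
  set M₂ : Mx ι := L₁ * M₁ with hM₂def
  have hM₂on : IsOn S M₂ := hL₁on.mul hM₁on
  have hcol2 : ∀ x, M₂ x a = if x = a then 1 else 0 := by
    intro x
    rw [hM₂def, hL₁def, add_mul, one_mul, Matrix.add_apply, mul_colsupp hP, hM₁aa, mul_one]
    by_cases hx : x = a
    · subst hx; rw [hPa, add_zero, hM₁aa, if_pos rfl]
    · rw [if_neg hx]
      simp only [hPdef, Matrix.of_apply]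
      rcases zmod2_eq01 (M₁ x a) with h | h
      · rw [if_neg, h, add_zero]
        rintro ⟨_, _, h1⟩; rw [h] at h1; exact zero_ne_one h1
      · rw [if_pos ⟨trivial, hx, h⟩, h]
        exact zmod2_add_self 1
  have hrow2 : ∀ y, M₂ a y = M₁ a y := by
    intro y
    rw [hM₂def, hL₁def, add_mul, one_mul, Matrix.add_apply, mul_colsupp hP, hPa, zero_mul, add_zero]
  -- clear the row to the right of a
  set Q : Mx ι := Matrix.of fun x y => if x = a ∧ y ≠ a ∧ M₂ a y = 1 then 1 else 0 with hQdef
  have hQ : ∀ x y, x ≠ a → Q x y = 0 := by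
    intro x y hx; simp only [hQdef, Matrix.of_apply]; simp [hx]
  have hQa : ∀ x, Q x a = 0 := by
    intro x; simp only [hQdef, Matrix.of_apply]; simp
  have hQS : ∀ x y, y ∉ S → Q x y = 0 := by
    intro x y hy
    simp only [hQdef, Matrix.of_apply]
    rw [if_neg]
    rintro ⟨rfl, hya, hy1⟩
    rw [hM₂on a y (Or.inr hy), if_neg (fun h => hya h.symm)] at hy1
    exact zero_ne_one hy1
  have hQQ : Q * Q = 0 := by
    ext x y; rw [rowsupp_mul hQ, hQa, zero_mul]; simp
  set U₀ : Mx ι := 1 + Q with hU₀def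
  have hU₀up : UpUni U₀ := by
    refine upUni_of (fun x => ?_) (fun x y hxy => ?_)
    · rw [hU₀def, Matrix.add_apply, Matrix.one_apply_eq]
      have hQxx : Q x x = 0 := by
        simp only [hQdef, Matrix.of_apply]
        rw [if_neg]; rintro ⟨rfl, hxa, _⟩; exact hxa rfl
      rw [hQxx, add_zero]
    · rw [hU₀def, Matrix.add_apply, Matrix.one_apply_ne (ne_of_gt hxy)]
      by_cases hx : x = a
      · subst hx
        rw [hQS a y (hlow y hxy)]; simp
      · rw [hQ x y hx]; simp
  have hU₀on : IsOn S U₀ := by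
    intro x y hxy
    rw [hU₀def, Matrix.add_apply, Matrix.one_apply]
    rcases hxy with h | h
    · rw [hQ x y (fun hxa => h (hxa ▸ hmem))]; simp
    · rw [hQS x y h]; simp
  have hU₀inv : U₀ * U₀ = 1 := by
    rw [hU₀def]
    have : (1 + Q) * (1 + Q) = 1 + (Q + Q) + Q * Q := by noncomm_ring
    rw [this, hQQ, mx_add_self]; simp
  set M₃ : Mx ι := M₂ * U₀ with hM₃def
  have hM₃on : IsOn S M₃ := hM₂on.mul hU₀on
  have hMQ : ∀ x y, (M₂ * Q) x y = (if x = a then 1 else 0) * Q a y := by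
    intro x y
    rw [rowsupp_mul hQ, hcol2]
  have hrow3 : ∀ y, M₃ a y = if a = y then 1 else 0 := by
    intro y
    rw [hM₃def, hU₀def, mul_add, mul_one, Matrix.add_apply, hMQ, if_pos rfl, one_mul, hrow2]
    by_cases hy : y = a
    · subst hy
      rw [hQa, add_zero, hM₁aa, if_pos rfl]
    · rw [if_neg (fun h => hy h.symm)]
      simp only [hQdef, Matrix.of_apply]
      rcases zmod2_eq01 (M₁ a y) with h | h
      · rw [if_neg, h, add_zero]
        rintro ⟨_, _, h1⟩; rw [hrow2, h] at h1; exact zero_ne_one h1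
      · rw [if_pos ⟨trivial, hy, by rw [hrow2]; exact h⟩, h]
        exact zmod2_add_self 1
  have hcol3 : ∀ x, M₃ x a = if x = a then 1 else 0 := by
    intro x
    rw [hM₃def, hU₀def, mul_add, mul_one, Matrix.add_apply, hMQ, hQa, mul_zero, add_zero, hcol2]
  have hM₃erase : IsOn (S.erase a) M₃ := by
    intro x y hxy
    by_cases hx : x = a
    · subst hx
      rw [hrow3]
    · by_cases hy : y = a
      · subst hy; rw [hcol3, if_neg hx]
      · refine hM₃on x y ?_
        rcases hxy with h | h
        · exact Or.inl fun hxS => h (Finset.mem_erase.mpr ⟨hx, hxS⟩)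
        · exact Or.inr fun hyS => h (Finset.mem_erase.mpr ⟨hy, hyS⟩)
  have hM₃eq : M₃ = L₁ * (V₀ * M) * U₀ := by
    rw [hM₃def, hM₂def, hM₁def]
  have hM₃inv : ∃ N₃ : Mx ι, M₃ * N₃ = 1 ∧ N₃ * M₃ = 1 := by
    refine ⟨U₀ * (N * (V₀ * L₁)), ?_, ?_⟩
    · rw [hM₃eq]
      calc L₁ * (V₀ * M) * U₀ * (U₀ * (N * (V₀ * L₁)))
          = L₁ * (V₀ * (M * ((U₀ * U₀) * (N * (V₀ * L₁))))) := by noncomm_ring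
        _ = L₁ * (V₀ * ((M * N) * (V₀ * L₁))) := by rw [hU₀inv, one_mul, ← mul_assoc M N (V₀ * L₁)]
        _ = L₁ * ((V₀ * V₀) * L₁) := by rw [hMN, one_mul, ← mul_assoc V₀ V₀ L₁]
        _ = 1 := by rw [hV₀inv, one_mul, hL₁inv]
    · rw [hM₃eq]
      calc U₀ * (N * (V₀ * L₁)) * (L₁ * (V₀ * M) * U₀)
          = U₀ * (N * (V₀ * ((L₁ * L₁) * (V₀ * M)))) * U₀ := by noncomm_ring
        _ = U₀ * (N * ((V₀ * V₀) * M)) * U₀ := by rw [hL₁inv, one_mul, ← mul_assoc V₀ V₀ M]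
        _ = U₀ * (N * M) * U₀ := by rw [hV₀inv, one_mul]
        _ = 1 := by rw [hNM, mul_one, hU₀inv]
  obtain ⟨U₁', L', U₂', hU₁on, hLon, hU₂on, hU₁up, hLlow, hU₂up, hM₃dec⟩ :=
    ih (S.erase a) (Finset.erase_ssubset hmem) M₃ hM₃erase hM₃inv
  obtain ⟨W, hWon, hWup, hUW, hWU⟩ := inv_exists_up (S.erase a) U₁' hU₁on hU₁up
  -- commutation : L₁ * U₁' = U₁' * X
  have hU₁rowa : ∀ y, U₁' a y = if a = y then 1 else 0 :=
    fun y => hU₁on a y (Or.inl (fun h => (Finset.mem_erase.mp h).1 rfl))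
  have hWrowa : ∀ y, W a y = if a = y then 1 else 0 :=
    fun y => hWon a y (Or.inl (fun h => (Finset.mem_erase.mp h).1 rfl))
  have hPU : P * U₁' = P := by
    ext x y
    rw [mul_colsupp hP, hU₁rowa]
    by_cases hy : y = a
    · subst hy; simp
    · rw [if_neg (fun h => hy h.symm), mul_zero, hP x y hy]
  have hWP : ∀ x y, y ≠ a → (W * P) x y = 0 := by
    intro x y hy
    rw [Matrix.mul_apply]
    exact Finset.sum_eq_zero fun z _ => by rw [hP z y hy, mul_zero]
  have hWPa : ∀ y, (W * P) a y = 0 := by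
    intro y
    rw [Matrix.mul_apply, Finset.sum_eq_single a]
    · rw [hWrowa, if_pos rfl, one_mul, hPa]
    · intro z _ hz; rw [hWrowa, if_neg (fun h => hz h.symm), zero_mul]
    · intro hx; exact absurd (Finset.mem_univ a) hx
  have hWPS : ∀ x y, x ∉ S → (W * P) x y = 0 := by
    intro x y hx
    rw [Matrix.mul_apply, Finset.sum_eq_single x]
    · rw [hPS x y hx, mul_zero]
    · intro z _ hz
      rw [hWon x z (Or.inl (fun h => hx (Finset.mem_of_mem_erase h))), if_neg (fun he => hz he.symm),
        zero_mul]
    · intro hx'; exact absurd (Finset.mem_univ x) hx'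
  set X : Mx ι := 1 + W * P with hXdef
  have hXlow : LowUni X := by
    constructor
    · intro x
      rw [hXdef, Matrix.add_apply, Matrix.one_apply_eq]
      by_cases hx : x = a
      · subst hx; rw [hWPa]; simp
      · rw [hWP x x hx]; simp
    · intro x y hxy
      rw [hXdef, Matrix.add_apply, Matrix.one_apply_ne (ne_of_lt hxy)]
      by_cases hy : y = a
      · rw [hWPS x y (hlow x (hy ▸ hxy))]; simp
      · rw [hWP x y hy]; simp
  have hXon : IsOn S X := by
    intro x y hxy
    rw [hXdef, Matrix.add_apply, Matrix.one_apply]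
    rcases hxy with h | h
    · rw [hWPS x y h]; simp
    · rw [hWP x y (fun hya => h (hya ▸ hmem))]; simp
  have hLU : L₁ * U₁' = U₁' * X := by
    rw [hL₁def, hXdef, add_mul, one_mul, hPU, mul_add, mul_one, ← mul_assoc, hUW, one_mul]
  -- assemble
  have hMrec : M = V₀ * (L₁ * (M₃ * U₀)) := by
    have e1 : M₃ * U₀ = M₂ := by
      rw [hM₃def, mul_assoc, hU₀inv, mul_one]
    rw [e1, hM₂def, hM₁def]
    calc M = (V₀ * V₀) * M := by rw [hV₀inv, one_mul]
      _ = V₀ * (V₀ * M) := by rw [mul_assoc]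
      _ = V₀ * ((L₁ * L₁) * (V₀ * M)) := by rw [hL₁inv, one_mul]
      _ = V₀ * (L₁ * (L₁ * (V₀ * M))) := by rw [mul_assoc]
  refine ⟨V₀ * U₁', X * L', U₂' * U₀,
    hV₀on.mul (hU₁on.mono (Finset.erase_subset a S)),
    hXon.mul (hLon.mono (Finset.erase_subset a S)),
    (hU₂on.mono (Finset.erase_subset a S)).mul hU₀on,
    hV₀up.mul hU₁up, hXlow.mul hLlow, hU₂up.mul hU₀up, ?_⟩
  rw [hMrec, hM₃dec]
  calc V₀ * (L₁ * (U₁' * L' * U₂' * U₀))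
      = V₀ * ((L₁ * U₁') * (L' * (U₂' * U₀))) := by noncomm_ring
    _ = V₀ * ((U₁' * X) * (L' * (U₂' * U₀))) := by rw [hLU]
    _ = V₀ * U₁' * (X * L') * (U₂' * U₀) := by noncomm_ring

end CnotAux

open CnotAux in
theorem cnot_parallel_4n (n : ℕ) (hn : 1 ≤ n)
    (M : Matrix (Fin n) (Fin n) (ZMod 2)) (hM : IsUnit M) :
    ∃ d : ℕ, d ≤ 4 * n ∧
    ∃ R : Fin d → Matrix (Fin n) (Fin n) (ZMod 2),
      (∀ k, IsParallelRowElim (R k)) ∧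
      ((List.ofFn R).reverse).prod * M = 1 := by
  classical
  have hdet : IsUnit M.det := (Matrix.isUnit_iff_isUnit_det M).mp hM
  have hMM : M * M⁻¹ = 1 := Matrix.mul_nonsing_inv M hdet
  have hM'M : M⁻¹ * M = 1 := Matrix.nonsing_inv_mul M hdet
  have hOn : IsOn (Finset.univ : Finset (Fin n)) M⁻¹ := by
    intro x y hxy
    rcases hxy with h | h
    · exact absurd (Finset.mem_univ x) h
    · exact absurd (Finset.mem_univ y) h
  obtain ⟨U₁, L, U₂, hU₁on, hLon, hU₂on, hU₁up, hLlow, hU₂up, hdec⟩ :=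
    ulu (Finset.univ : Finset (Fin n)) M⁻¹ hOn ⟨M, hM'M, hMM⟩
  have hcard : (Finset.univ : Finset (Fin n)).card = n := by simp
  have c1 : CanDo Finset.univ (fdepth n) U₁ := by
    have := diag_canDo_up Finset.univ U₁ hU₁on hU₁up
    rwa [hcard] at this
  have c2 : CanDo Finset.univ (fdepth n) L := by
    have := diag_canDo Finset.univ L hLon hLlow
    rwa [hcard] at this
  have c3 : CanDo Finset.univ (fdepth n) U₂ := by
    have := diag_canDo_up Finset.univ U₂ hU₂on hU₂up
    rwa [hcard] at this
  have cAll : CanDo Finset.univ (fdepth n + fdepth n + fdepth n) M⁻¹ := by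
    rw [hdec]
    exact (c1.mul c2).mul c3
  have hle : fdepth n + fdepth n + fdepth n ≤ 4 * n := by
    have := fdepth_bound n
    omega
  obtain ⟨l, hlen, hlay, hprod⟩ := cAll.mono (le_refl _) hle
  refine ⟨l.reverse.length, by simpa using hlen, l.reverse.get, ?_, ?_⟩
  · intro k
    have hmem : l.reverse.get k ∈ l.reverse := l.reverse.get_mem k
    rw [List.mem_reverse] at hmem
    exact (hlay _ hmem).isParallelRowElim
  · rw [List.ofFn_get, List.reverse_reverse, hprod, hM'M]
end

section
/- For every integer n ≥ 2 and every invertible lower-triangular matrix L ∈ GL(n, F₂) (i.e., L[i,j] = 0 whenever i < j; invertibility forces all diagonal entries to be 1), there exist a natural number d ≤ 2n − 3 and parallel row-elimination matrices R₁, …, R_d ∈ F₂^{n×n} such that R_d ⋯ R₂R₁L = I. -/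
open Matrix

namespace CnotAux

variable {n : ℕ}

/-- Condition: the pair `p = (i, j)` is "active" at step `s` for matrix `A`. -/
def Act (s : ℕ) (A : Matrix (Fin n) (Fin n) (ZMod 2)) (p : Fin n × Fin n) : Prop :=
  (p.1 : ℕ) + (p.2 : ℕ) = s ∧ p.1 < p.2 ∧ A p.2 p.1 = 1

instance (s : ℕ) (A : Matrix (Fin n) (Fin n) (ZMod 2)) : DecidablePred (Act s A) :=
  fun _ => by unfold Act; infer_instance

/-- One layer of parallel eliminations at "anti-diagonal" `s`. -/
def layer (s : ℕ) (A : Matrix (Fin n) (Fin n) (ZMod 2)) : Matrix (Fin n) (Fin n) (ZMod 2) :=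
  1 + ∑ p : Fin n × Fin n,
      if Act s A p then Matrix.single p.2 p.1 (1 : ZMod 2) else 0

lemma act_unique_row {s : ℕ} {A : Matrix (Fin n) (Fin n) (ZMod 2)}
    {p q : Fin n × Fin n} (hp : Act s A p) (hq : Act s A q) (h : p.2 = q.2) : p = q := by
  have h2 : (p.2 : ℕ) = (q.2 : ℕ) := by rw [h]
  have := hp.1; have := hq.1
  exact Prod.ext (Fin.ext (by omega)) h

lemma layer_mul_apply (s : ℕ) (A : Matrix (Fin n) (Fin n) (ZMod 2)) (a b : Fin n) :
    (layer s A * A) a b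
      = A a b + ∑ p : Fin n × Fin n,
          (if Act s A p ∧ p.2 = a then A p.1 b else 0) := by
  rw [layer, add_mul, one_mul, Matrix.sum_mul]
  rw [Matrix.add_apply, Matrix.sum_apply]
  congr 1
  refine Finset.sum_congr rfl fun p _ => ?_
  by_cases h : Act s A p
  · simp only [h, if_true, true_and]
    by_cases ha : p.2 = a
    · subst ha
      rw [if_pos rfl, Matrix.single_mul_apply_same, one_mul]
    · rw [if_neg ha]
      exact Matrix.single_mul_apply_of_ne 1 p.2 p.1 a b (fun hc => ha hc.symm) A
  · simp [h]

lemma layer_mul_apply_act {s : ℕ} {A : Matrix (Fin n) (Fin n) (ZMod 2)} {i a : Fin n}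
    (h : Act s A (i, a)) (b : Fin n) :
    (layer s A * A) a b = A a b + A i b := by
  rw [layer_mul_apply]
  congr 1
  rw [Finset.sum_eq_single (i, a)]
  · simp [h]
  · intro q _ hq
    by_cases hq2 : Act s A q ∧ q.2 = a
    · exact absurd (act_unique_row hq2.1 h hq2.2) hq
    · simp [hq2]
  · simp

lemma layer_mul_apply_inact {s : ℕ} {A : Matrix (Fin n) (Fin n) (ZMod 2)} {a : Fin n}
    (h : ∀ i : Fin n, ¬ Act s A (i, a)) (b : Fin n) :
    (layer s A * A) a b = A a b := by
  rw [layer_mul_apply]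
  have : ∀ p : Fin n × Fin n,
      (if Act s A p ∧ p.2 = a then A p.1 b else 0) = 0 := by
    intro p
    rw [if_neg]
    rintro ⟨hp, rfl⟩
    exact h p.1 hp
  rw [Finset.sum_congr rfl fun p _ => this p, Finset.sum_const_zero, add_zero]

/-- The invariant after step `s`. -/
def Inv (s : ℕ) (A : Matrix (Fin n) (Fin n) (ZMod 2)) : Prop :=
  (∀ i j : Fin n, i < j → A i j = 0) ∧ (∀ i : Fin n, A i i = 1) ∧
  (∀ i j : Fin n, i < j → (i : ℕ) + (j : ℕ) ≤ s → A j i = 0)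

lemma zmod2_ne_one {x : ZMod 2} (h : x ≠ 1) : x = 0 := by
  revert h; revert x; decide

lemma inv_step {s : ℕ} {A : Matrix (Fin n) (Fin n) (ZMod 2)} (h : Inv s A) :
    Inv (s + 1) (layer (s + 1) A * A) := by
  obtain ⟨hup, hdiag, hlow⟩ := h
  have main : ∀ a b : Fin n,
      (b < a → (a:ℕ) + b ≤ s + 1 → (layer (s+1) A * A) a b = 0) ∧
      (a = b → (layer (s+1) A * A) a b = 1) ∧
      (a < b → (layer (s+1) A * A) a b = 0) := by
    intro a b
    by_cases hact : ∃ i : Fin n, Act (s+1) A (i, a)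
    · obtain ⟨i, hi⟩ := hact
      obtain ⟨hsum, hilt, hAi⟩ := hi
      have hsum : (i : ℕ) + (a : ℕ) = s + 1 := hsum
      have hilt : i < a := hilt
      have hAi : A a i = 1 := hAi
      rw [layer_mul_apply_act (A := A) (i := i) (a := a) ⟨hsum, hilt, hAi⟩ b]
      refine ⟨?_, ?_, ?_⟩
      · intro hba hle
        by_cases hbi : b = i
        · subst hbi
          rw [hAi, hdiag]; decide
        · have hbne : (b : ℕ) ≠ (i : ℕ) := fun hc => hbi (Fin.ext hc)
          have h1 : A a b = 0 := by
            apply hlow b a hba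
            omega
          rcases lt_trichotomy b i with hbi' | hbi' | hbi'
          · have h2 : A i b = 0 := by
              apply hlow b i hbi'
              have : (b:ℕ) < (i:ℕ) := hbi'
              omega
            rw [h1, h2, add_zero]
          · exact absurd hbi' hbi
          · have h2 : A i b = 0 := hup i b hbi'
            rw [h1, h2, add_zero]
      · rintro rfl
        rw [hdiag, hup i a hilt, add_zero]
      · intro hab
        rw [hup a b hab, hup i b (lt_trans hilt hab), add_zero]
    · push_neg at hact
      rw [layer_mul_apply_inact hact b]
      refine ⟨?_, ?_, ?_⟩
      · intro hba hle
        rcases Nat.lt_or_ge ((b:ℕ) + a) (s+1) with hlt | hge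
        · exact hlow b a hba (by omega)
        · have hsum : (b:ℕ) + (a:ℕ) = s + 1 := by omega
          have := hact b
          rw [Act] at this
          push_neg at this
          exact zmod2_ne_one (this hsum hba)
      · rintro rfl; exact hdiag a
      · exact hup a b
  exact ⟨fun i j hij => (main i j).2.2 hij, fun i => (main i i).2.1 rfl,
    fun i j hij hle => (main j i).1 hij (by omega)⟩

/-- The set of active pairs at step `s`. -/
def actSet (s : ℕ) (A : Matrix (Fin n) (Fin n) (ZMod 2)) : Finset (Fin n × Fin n) :=
  Finset.univ.filter (Act s A)

lemma mem_actSet {s : ℕ} {A : Matrix (Fin n) (Fin n) (ZMod 2)} {p : Fin n × Fin n} :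
    p ∈ actSet s A ↔ Act s A p := by
  simp [actSet]

/-- Each layer is a parallel row-elimination matrix. -/
lemma isParallelRowElim_layer (s : ℕ) (A : Matrix (Fin n) (Fin n) (ZMod 2)) :
    IsParallelRowElim (layer s A) := by
  right
  set e := (actSet s A).equivFin.symm with he
  refine ⟨(actSet s A).card, fun k => ((e k : Fin n × Fin n)).1,
    fun k => ((e k : Fin n × Fin n)).2, ?_, ?_⟩
  · have hact : ∀ k, Act s A (e k : Fin n × Fin n) := fun k => mem_actSet.mp (e k).2
    have hlt : ∀ k, ((e k : Fin n × Fin n).1 : ℕ) < ((e k : Fin n × Fin n).2 : ℕ) :=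
      fun k => (hact k).2.1
    have hsum : ∀ k, ((e k : Fin n × Fin n).1 : ℕ) + ((e k : Fin n × Fin n).2 : ℕ) = s :=
      fun k => (hact k).1
    have einj : Function.Injective e := (Equiv.injective _)
    intro x y hxy
    match x, y with
    | Sum.inl x, Sum.inl y =>
      simp only [Sum.elim_inl] at hxy
      have h1 : ((e x : Fin n × Fin n).1 : ℕ) = ((e y : Fin n × Fin n).1 : ℕ) := by rw [hxy]
      have h2 : (e x : Fin n × Fin n).2 = (e y : Fin n × Fin n).2 := by
        have := hsum x; have := hsum y
        exact Fin.ext (by omega)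
      rw [einj (Subtype.ext (Prod.ext hxy h2))]
    | Sum.inl x, Sum.inr y =>
      simp only [Sum.elim_inl, Sum.elim_inr] at hxy
      have h1 := hlt x; have h2 := hlt y
      have h3 := hsum x; have h4 := hsum y
      have h5 : ((e x : Fin n × Fin n).1 : ℕ) = ((e y : Fin n × Fin n).2 : ℕ) := by rw [hxy]
      omega
    | Sum.inr x, Sum.inl y =>
      simp only [Sum.elim_inl, Sum.elim_inr] at hxy
      have h1 := hlt x; have h2 := hlt y
      have h3 := hsum x; have h4 := hsum y
      have h5 : ((e x : Fin n × Fin n).2 : ℕ) = ((e y : Fin n × Fin n).1 : ℕ) := by rw [hxy]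
      omega
    | Sum.inr x, Sum.inr y =>
      simp only [Sum.elim_inr] at hxy
      have h1 : ((e x : Fin n × Fin n).2 : ℕ) = ((e y : Fin n × Fin n).2 : ℕ) := by rw [hxy]
      have h2 : (e x : Fin n × Fin n).1 = (e y : Fin n × Fin n).1 := by
        have := hsum x; have := hsum y
        exact Fin.ext (by omega)
      rw [einj (Subtype.ext (Prod.ext h2 hxy))]
  · rw [layer]
    congr 1
    have h1 : ∑ p : Fin n × Fin n,
        (if Act s A p then Matrix.single p.2 p.1 (1 : ZMod 2) else 0)
        = ∑ p ∈ actSet s A, Matrix.single p.2 p.1 (1 : ZMod 2) := by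
      rw [actSet, Finset.sum_filter]
    rw [h1, ← Finset.sum_attach (actSet s A)
      (fun p => Matrix.single p.2 p.1 (1 : ZMod 2))]
    exact (Equiv.sum_comp e
      (fun p : actSet s A => Matrix.single (p : Fin n × Fin n).2
        (p : Fin n × Fin n).1 (1 : ZMod 2))).symm

/-- The sequence of partially reduced matrices. -/
def Mseq (L : Matrix (Fin n) (Fin n) (ZMod 2)) : ℕ → Matrix (Fin n) (Fin n) (ZMod 2)
  | 0 => L
  | s + 1 => layer (s + 1) (Mseq L s) * Mseq L s

lemma prod_Mseq (L : Matrix (Fin n) (Fin n) (ZMod 2)) (m : ℕ) :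
    ((List.ofFn (fun k : Fin m => layer ((k : ℕ) + 1) (Mseq L k))).reverse).prod * L
      = Mseq L m := by
  induction m with
  | zero => simp [Mseq]
  | succ m ih =>
    rw [List.ofFn_succ']
    simp only [List.concat_eq_append, List.reverse_append, List.reverse_cons,
      List.reverse_nil, List.nil_append, List.singleton_append, List.prod_cons,
      Fin.val_last, Fin.coe_castSucc]
    rw [mul_assoc, ih]
    rfl

end CnotAux

theorem cnot_parallel_lower_triangular (n : ℕ) (hn : 2 ≤ n)
    (L : Matrix (Fin n) (Fin n) (ZMod 2)) (hL : IsUnit L)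
    (hlow : ∀ i j : Fin n, i < j → L i j = 0) :
    ∃ d : ℕ, d ≤ 2 * n - 3 ∧
    ∃ R : Fin d → Matrix (Fin n) (Fin n) (ZMod 2),
      (∀ k, IsParallelRowElim (R k)) ∧
      ((List.ofFn R).reverse).prod * L = 1 := by
  classical
  -- diagonal entries are 1
  have hdet : L.det = ∏ i : Fin n, L i i :=
    Matrix.det_of_lowerTriangular L (by
      intro i j hij
      exact hlow _ _ hij)
  have hdiag : ∀ i : Fin n, L i i = 1 := by
    have hdu : IsUnit L.det := (Matrix.isUnit_iff_isUnit_det L).mp hL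
    rw [hdet] at hdu
    intro i
    have : L i i ≠ 0 := by
      intro h0
      rw [Finset.prod_eq_zero (f := fun j : Fin n => L j j) (Finset.mem_univ i) h0] at hdu
      exact (not_isUnit_zero : ¬ IsUnit (0 : ZMod 2)) hdu
    revert this
    generalize L i i = x
    revert x; decide
  -- set up the elimination
  refine ⟨2 * n - 3, le_refl _, fun k => CnotAux.layer ((k : ℕ) + 1) (CnotAux.Mseq L k),
    fun k => CnotAux.isParallelRowElim_layer _ _, ?_⟩
  rw [CnotAux.prod_Mseq L (2 * n - 3)]
  have hinv : ∀ m : ℕ, CnotAux.Inv m (CnotAux.Mseq L m) := by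
    intro m
    induction m with
    | zero =>
      exact ⟨hlow, hdiag, fun i j hij hle => by omega⟩
    | succ m ih => exact CnotAux.inv_step ih
  obtain ⟨hup, hdg, hlo⟩ := hinv (2 * n - 3)
  ext a b
  rcases lt_trichotomy a b with h | h | h
  · rw [hup a b h, Matrix.one_apply_ne (Fin.ne_of_lt h)]
  · subst h
    rw [hdg a, Matrix.one_apply_eq]
  · rw [Matrix.one_apply_ne (Fin.ne_of_gt h), hlo b a h]
    have hb : (b : ℕ) < (a : ℕ) := h
    have ha : (a : ℕ) < n := a.isLt
    omega
end

section
/- For every integer n ≥ 2, let M ∈ F₂^{n×n} be the lower-triangular all-ones matrix defined by M[i,j] = 1 if j ≤ i and M[i,j] = 0 otherwise (the prefix-XOR-summation operator). Then there exist a natural number d with d < 2·⌈log₂ n⌉ and parallel row-elimination matrices R₁, …, R_d ∈ F₂^{n×n} such that R_d ⋯ R₂R₁ = M. -/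
open Matrix

def Mmat (n : ℕ) : Matrix (Fin n) (Fin n) (ZMod 2) :=
  Matrix.of (fun i j : Fin n => if j ≤ i then 1 else 0)

def oddE (n : ℕ) (a : Fin (n/2)) : Fin n := ⟨2 * a.val + 1, by have := a.isLt; omega⟩

lemma oddE_val {n : ℕ} (a : Fin (n/2)) : (oddE n a).val = 2 * a.val + 1 := rfl

lemma oddE_odd {n : ℕ} (a : Fin (n/2)) : (oddE n a).val % 2 = 1 := by
  rw [oddE_val]; omega

lemma oddE_inj {n : ℕ} : Function.Injective (oddE n) := by
  intro a b h
  have h2 : 2 * a.val + 1 = 2 * b.val + 1 := congrArg Fin.val h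
  exact Fin.ext (by omega)

def liftMat (n : ℕ) (A : Matrix (Fin (n/2)) (Fin (n/2)) (ZMod 2)) :
    Matrix (Fin n) (Fin n) (ZMod 2) :=
  Matrix.of fun i j =>
    if h : i.val % 2 = 1 ∧ j.val % 2 = 1 then
      A ⟨i.val / 2, by have := i.isLt; omega⟩ ⟨j.val / 2, by have := j.isLt; omega⟩
    else if i = j then 1 else 0

lemma liftMat_oo {n : ℕ} (A : Matrix (Fin (n/2)) (Fin (n/2)) (ZMod 2)) {i j : Fin n}
    (h1 : i.val % 2 = 1) (h2 : j.val % 2 = 1) :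
    liftMat n A i j
      = A ⟨i.val / 2, by have := i.isLt; omega⟩ ⟨j.val / 2, by have := j.isLt; omega⟩ := by
  simp [liftMat, h1, h2]

lemma liftMat_not {n : ℕ} (A : Matrix (Fin (n/2)) (Fin (n/2)) (ZMod 2)) {i j : Fin n}
    (h : ¬(i.val % 2 = 1 ∧ j.val % 2 = 1)) :
    liftMat n A i j = if i = j then 1 else 0 := by
  simp only [liftMat, Matrix.of_apply, dif_neg h]

lemma liftMat_oddE {n : ℕ} (A : Matrix (Fin (n/2)) (Fin (n/2)) (ZMod 2)) (a b : Fin (n/2)) :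
    liftMat n A (oddE n a) (oddE n b) = A a b := by
  rw [liftMat_oo A (oddE_odd a) (oddE_odd b)]
  congr 1
  · exact Fin.ext (show (2 * a.val + 1) / 2 = a.val by omega)
  · exact Fin.ext (show (2 * b.val + 1) / 2 = b.val by omega)

lemma sum_odd {n : ℕ} (f : Fin n → ZMod 2) (hf : ∀ k : Fin n, k.val % 2 = 0 → f k = 0) :
    ∑ k, f k = ∑ a : Fin (n / 2), f (oddE n a) := by
  classical
  let e : Fin (n/2) ↪ Fin n := ⟨oddE n, oddE_inj⟩
  have h1 : ∑ k ∈ Finset.univ.map e, f k = ∑ k, f k := by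
    apply Finset.sum_subset (Finset.subset_univ _)
    intro x _ hx
    apply hf
    by_contra hodd
    apply hx
    simp only [Finset.mem_map, Finset.mem_univ, true_and]
    refine ⟨⟨x.val / 2, by have := x.isLt; omega⟩, ?_⟩
    exact Fin.ext (show 2 * (x.val / 2) + 1 = x.val by omega)
  rw [← h1, Finset.sum_map]
  rfl

lemma liftMat_one (n : ℕ) : liftMat n (1 : Matrix (Fin (n/2)) (Fin (n/2)) (ZMod 2)) = 1 := by
  ext i j
  by_cases h : i.val % 2 = 1 ∧ j.val % 2 = 1
  · rw [liftMat_oo _ h.1 h.2, Matrix.one_apply, Matrix.one_apply]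
    have hiff : ((⟨i.val / 2, by have := i.isLt; omega⟩ : Fin (n/2))
        = ⟨j.val / 2, by have := j.isLt; omega⟩) ↔ i = j := by
      rw [Fin.mk.injEq, Fin.ext_iff]
      obtain ⟨h1, h2⟩ := h
      omega
    rw [if_congr hiff rfl rfl]
  · rw [liftMat_not _ h, Matrix.one_apply]

lemma liftMat_mul (n : ℕ) (A B : Matrix (Fin (n/2)) (Fin (n/2)) (ZMod 2)) :
    liftMat n (A * B) = liftMat n A * liftMat n B := by
  ext i j
  rw [Matrix.mul_apply]
  by_cases hi : i.val % 2 = 1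
  · by_cases hj : j.val % 2 = 1
    · rw [liftMat_oo _ hi hj, Matrix.mul_apply]
      rw [sum_odd (fun k => liftMat n A i k * liftMat n B k j) (by
        intro k hk
        show liftMat n A i k * liftMat n B k j = 0
        rw [liftMat_not _ (by omega), if_neg (by intro h; subst h; omega), zero_mul])]
      apply Finset.sum_congr rfl
      intro a _
      rw [liftMat_oo _ hi (oddE_odd a), liftMat_oo _ (oddE_odd a) hj]
      congr 2
      · exact Fin.ext (show a.val = (2 * a.val + 1) / 2 by omega)
      · exact Fin.ext (show a.val = (2 * a.val + 1) / 2 by omega)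
    · rw [liftMat_not _ (by omega), if_neg (by intro h; subst h; omega)]
      apply (Finset.sum_eq_zero _).symm
      intro k _
      by_cases hk : k.val % 2 = 1
      · rw [liftMat_not B (by omega), if_neg (by intro h; subst h; omega), mul_zero]
      · rw [liftMat_not A (by omega), if_neg (by intro h; subst h; omega), zero_mul]
  · rw [liftMat_not _ (by omega)]
    have hterm : ∀ k : Fin n, liftMat n A i k * liftMat n B k j
        = if i = k then liftMat n B k j else 0 := by
      intro k
      rw [liftMat_not A (by omega)]
      split_ifs <;> simp
    simp_rw [hterm]
    rw [Finset.sum_ite_eq, if_pos (Finset.mem_univ i), liftMat_not B (by omega)]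

def liftHom (n : ℕ) :
    Matrix (Fin (n/2)) (Fin (n/2)) (ZMod 2) →* Matrix (Fin n) (Fin n) (ZMod 2) where
  toFun := liftMat n
  map_one' := liftMat_one n
  map_mul' := liftMat_mul n

lemma sum_std_apply {n t : ℕ} (src tgt : Fin t → Fin n) (htgt : Function.Injective tgt)
    (i j : Fin n) :
    (∑ k, Matrix.single (tgt k) (src k) (1 : ZMod 2)) i j
      = if ∃ k, tgt k = i ∧ src k = j then 1 else 0 := by
  rw [Matrix.sum_apply]
  by_cases h : ∃ k, tgt k = i ∧ src k = j
  · obtain ⟨k0, hk1, hk2⟩ := h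
    rw [if_pos ⟨k0, hk1, hk2⟩, Finset.sum_eq_single k0]
    · rw [← hk1, ← hk2]; simp [Matrix.single]
    · intro k _ hk
      simp only [Matrix.single, Matrix.of_apply]
      rw [if_neg]
      rintro ⟨h1, h2⟩
      exact hk (htgt (h1.trans hk1.symm))
    · simp
  · rw [if_neg h]
    apply Finset.sum_eq_zero
    intro k _
    simp only [Matrix.single, Matrix.of_apply]
    rw [if_neg]
    rintro ⟨h1, h2⟩
    exact h ⟨k, h1, h2⟩

lemma liftMat_parallel {n : ℕ} (A : Matrix (Fin (n/2)) (Fin (n/2)) (ZMod 2))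
    (h : IsParallelRowElim A) : IsParallelRowElim (liftMat n A) := by
  rcases h with h | ⟨t, si, tj, hinj, rfl⟩
  · left; rw [h, liftMat_one]
  · right
    have htj : Function.Injective tj := fun a b hab => by
      have := hinj (show Sum.elim si tj (Sum.inr a) = Sum.elim si tj (Sum.inr b) from hab)
      simpa using this
    refine ⟨t, fun k => oddE n (si k), fun k => oddE n (tj k), ?_, ?_⟩
    · intro x y hxy
      apply hinj
      apply oddE_inj
      cases x <;> cases y <;> exact hxy
    · ext p q
      rw [Matrix.add_apply,
        sum_std_apply (fun k => oddE n (si k)) (fun k => oddE n (tj k))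
          (fun a b hab => htj (oddE_inj hab))]
      by_cases hp : p.val % 2 = 1
      · by_cases hq : q.val % 2 = 1
        · rw [liftMat_oo _ hp hq, Matrix.add_apply,
            sum_std_apply si tj htj, Matrix.one_apply, Matrix.one_apply]
          have hiff1 : ((⟨p.val / 2, by have := p.isLt; omega⟩ : Fin (n/2))
              = ⟨q.val / 2, by have := q.isLt; omega⟩) ↔ p = q := by
            rw [Fin.mk.injEq, Fin.ext_iff]; omega
          have hiff2 : (∃ k, tj k = (⟨p.val / 2, by have := p.isLt; omega⟩ : Fin (n/2))
                ∧ si k = ⟨q.val / 2, by have := q.isLt; omega⟩)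
              ↔ (∃ k, oddE n (tj k) = p ∧ oddE n (si k) = q) := by
            constructor
            · rintro ⟨k, h1, h2⟩
              refine ⟨k, Fin.ext ?_, Fin.ext ?_⟩
              · have e1 : (tj k).val = p.val / 2 := congrArg Fin.val h1
                show 2 * (tj k).val + 1 = p.val
                omega
              · have e2 : (si k).val = q.val / 2 := congrArg Fin.val h2
                show 2 * (si k).val + 1 = q.val
                omega
            · rintro ⟨k, h1, h2⟩
              have e1 : 2 * (tj k).val + 1 = p.val := congrArg Fin.val h1
              have e2 : 2 * (si k).val + 1 = q.val := congrArg Fin.val h2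
              exact ⟨k, Fin.ext (show (tj k).val = p.val / 2 by omega),
                Fin.ext (show (si k).val = q.val / 2 by omega)⟩
          rw [if_congr hiff1 rfl rfl, if_congr hiff2 rfl rfl]
        · rw [liftMat_not _ (by omega), Matrix.one_apply]
          have hex : ¬ (∃ k, oddE n (tj k) = p ∧ oddE n (si k) = q) := by
            rintro ⟨k, h1, h2⟩
            have e2 : 2 * (si k).val + 1 = q.val := congrArg Fin.val h2
            omega
          rw [if_neg hex, add_zero]
      · rw [liftMat_not _ (by omega), Matrix.one_apply]
        have hex : ¬ (∃ k, oddE n (tj k) = p ∧ oddE n (si k) = q) := by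
          rintro ⟨k, h1, h2⟩
          have e1 : 2 * (tj k).val + 1 = p.val := congrArg Fin.val h1
          omega
        rw [if_neg hex, add_zero]

def iInit (n : ℕ) (k : Fin (n/2)) : Fin n := ⟨2 * k.val, by have := k.isLt; omega⟩
def jInit (n : ℕ) (k : Fin (n/2)) : Fin n := ⟨2 * k.val + 1, by have := k.isLt; omega⟩
def iFin (n : ℕ) (k : Fin ((n-1)/2)) : Fin n := ⟨2 * k.val + 1, by have := k.isLt; omega⟩
def jFin (n : ℕ) (k : Fin ((n-1)/2)) : Fin n := ⟨2 * k.val + 2, by have := k.isLt; omega⟩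

def initL (n : ℕ) : Matrix (Fin n) (Fin n) (ZMod 2) :=
  1 + ∑ k : Fin (n/2), Matrix.single (jInit n k) (iInit n k) 1

def finL (n : ℕ) : Matrix (Fin n) (Fin n) (ZMod 2) :=
  1 + ∑ k : Fin ((n-1)/2), Matrix.single (jFin n k) (iFin n k) 1

lemma jInit_inj {n : ℕ} : Function.Injective (jInit n) := by
  intro a b h
  have h2 : 2 * a.val + 1 = 2 * b.val + 1 := congrArg Fin.val h
  exact Fin.ext (by omega)

lemma jFin_inj {n : ℕ} : Function.Injective (jFin n) := by
  intro a b h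
  have h2 : 2 * a.val + 2 = 2 * b.val + 2 := congrArg Fin.val h
  exact Fin.ext (by omega)

lemma initL_parallel (n : ℕ) : IsParallelRowElim (initL n) := by
  right
  refine ⟨n/2, iInit n, jInit n, ?_, rfl⟩
  rintro (a | a) (b | b) h
  · have h2 : 2 * a.val = 2 * b.val := congrArg Fin.val h
    exact congrArg Sum.inl (Fin.ext (by omega))
  · have h2 : 2 * a.val = 2 * b.val + 1 := congrArg Fin.val h
    omega
  · have h2 : 2 * a.val + 1 = 2 * b.val := congrArg Fin.val h
    omega
  · have h2 : 2 * a.val + 1 = 2 * b.val + 1 := congrArg Fin.val h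
    exact congrArg Sum.inr (Fin.ext (by omega))

lemma finL_parallel (n : ℕ) : IsParallelRowElim (finL n) := by
  right
  refine ⟨(n-1)/2, iFin n, jFin n, ?_, rfl⟩
  rintro (a | a) (b | b) h
  · have h2 : 2 * a.val + 1 = 2 * b.val + 1 := congrArg Fin.val h
    exact congrArg Sum.inl (Fin.ext (by omega))
  · have h2 : 2 * a.val + 1 = 2 * b.val + 2 := congrArg Fin.val h
    omega
  · have h2 : 2 * a.val + 2 = 2 * b.val + 1 := congrArg Fin.val h
    omega
  · have h2 : 2 * a.val + 2 = 2 * b.val + 2 := congrArg Fin.val h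
    exact congrArg Sum.inr (Fin.ext (by omega))

lemma initL_apply {n : ℕ} (i j : Fin n) :
    initL n i j = (if i = j then 1 else 0)
      + (if i.val % 2 = 1 ∧ j.val + 1 = i.val then 1 else 0) := by
  rw [initL, Matrix.add_apply, Matrix.one_apply, sum_std_apply (iInit n) (jInit n) jInit_inj]
  congr 1
  have hiff : (∃ k, jInit n k = i ∧ iInit n k = j) ↔ (i.val % 2 = 1 ∧ j.val + 1 = i.val) := by
    constructor
    · rintro ⟨k, h1, h2⟩
      have e1 : 2 * k.val + 1 = i.val := congrArg Fin.val h1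
      have e2 : 2 * k.val = j.val := congrArg Fin.val h2
      omega
    · rintro ⟨h1, h2⟩
      refine ⟨⟨i.val / 2, by have := i.isLt; omega⟩,
        Fin.ext (show 2 * (i.val / 2) + 1 = i.val by omega),
        Fin.ext (show 2 * (i.val / 2) = j.val by omega)⟩
  rw [if_congr hiff rfl rfl]

lemma finL_apply {n : ℕ} (i j : Fin n) :
    finL n i j = (if i = j then 1 else 0)
      + (if i.val % 2 = 0 ∧ j.val + 1 = i.val then 1 else 0) := by
  rw [finL, Matrix.add_apply, Matrix.one_apply, sum_std_apply (iFin n) (jFin n) jFin_inj]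
  congr 1
  have hiff : (∃ k, jFin n k = i ∧ iFin n k = j) ↔ (i.val % 2 = 0 ∧ j.val + 1 = i.val) := by
    constructor
    · rintro ⟨k, h1, h2⟩
      have e1 : 2 * k.val + 2 = i.val := congrArg Fin.val h1
      have e2 : 2 * k.val + 1 = j.val := congrArg Fin.val h2
      omega
    · rintro ⟨h1, h2⟩
      refine ⟨⟨(i.val - 2) / 2, by have := i.isLt; omega⟩,
        Fin.ext (show 2 * ((i.val - 2) / 2) + 2 = i.val by omega),
        Fin.ext (show 2 * ((i.val - 2) / 2) + 1 = j.val by omega)⟩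
  rw [if_congr hiff rfl rfl]

lemma C_apply {n : ℕ} (i j : Fin n) :
    (liftMat n (Mmat (n/2)) * initL n) i j
      = if i.val % 2 = 1 then (if j.val ≤ i.val then 1 else 0)
        else (if i = j then 1 else 0) := by
  rw [Matrix.mul_apply]
  have hterm : ∀ k : Fin n, liftMat n (Mmat (n/2)) i k * initL n k j
      = (if k = j then liftMat n (Mmat (n/2)) i k else 0)
        + (if k.val % 2 = 1 ∧ j.val + 1 = k.val then liftMat n (Mmat (n/2)) i k else 0) := by
    intro k
    rw [initL_apply, mul_add, mul_ite, mul_ite, mul_one, mul_zero]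
  simp_rw [hterm, Finset.sum_add_distrib]
  rw [Finset.sum_ite_eq', if_pos (Finset.mem_univ j)]
  by_cases hc : j.val % 2 = 0 ∧ j.val + 1 < n
  · obtain ⟨hje, hjn⟩ := hc
    rw [Finset.sum_eq_single (⟨j.val + 1, hjn⟩ : Fin n)]
    · by_cases hi : i.val % 2 = 1
      · rw [if_pos hi, liftMat_not _ (by omega),
          if_neg (show i ≠ j by intro h; have := congrArg Fin.val h; omega),
          if_pos (show ((⟨j.val+1, hjn⟩ : Fin n)).val % 2 = 1 ∧ j.val + 1 = ((⟨j.val+1, hjn⟩ : Fin n)).val from ⟨by show (j.val+1) % 2 = 1; omega, rfl⟩),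
          liftMat_oo _ hi (show ((⟨j.val+1, hjn⟩ : Fin n)).val % 2 = 1 from by show (j.val+1) % 2 = 1; omega),
          Mmat]
        simp only [Matrix.of_apply]
        rw [zero_add]
        refine if_congr ?_ rfl rfl
        rw [Fin.le_def]
        show (j.val + 1) / 2 ≤ i.val / 2 ↔ j.val ≤ i.val
        omega
      · rw [if_neg hi, liftMat_not _ (fun h => hi h.1),
          if_pos (show ((⟨j.val+1, hjn⟩ : Fin n)).val % 2 = 1 ∧ j.val + 1 = ((⟨j.val+1, hjn⟩ : Fin n)).val from ⟨by show (j.val+1) % 2 = 1; omega, rfl⟩),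
          liftMat_not _ (fun h => hi h.1),
          if_neg (show i ≠ ⟨j.val+1, hjn⟩ by intro h; have h2 : i.val = j.val + 1 := congrArg Fin.val h; omega),
          add_zero]
    · intro k _ hk
      rw [if_neg]
      rintro ⟨hk1, hk2⟩
      exact hk (Fin.ext hk2.symm)
    · simp
  · rw [Finset.sum_eq_zero (fun k _ => if_neg (by
      rintro ⟨hk1, hk2⟩
      have := k.isLt
      exact hc ⟨by omega, by omega⟩)), add_zero]
    by_cases hi : i.val % 2 = 1
    · rw [if_pos hi]
      by_cases hj : j.val % 2 = 1
      · rw [liftMat_oo _ hi hj, Mmat]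
        simp only [Matrix.of_apply]
        refine if_congr ?_ rfl rfl
        rw [Fin.le_def]
        show j.val / 2 ≤ i.val / 2 ↔ j.val ≤ i.val
        omega
      · have hjn : ¬ (j.val + 1 < n) := fun h => hc ⟨by omega, h⟩
        have := i.isLt
        have := j.isLt
        rw [liftMat_not _ (by omega),
          if_neg (show i ≠ j by intro h; have := congrArg Fin.val h; omega),
          if_neg (show ¬ j.val ≤ i.val by omega)]
    · rw [if_neg hi, liftMat_not _ (by omega)]

lemma M_eq {n : ℕ} : finL n * (liftMat n (Mmat (n/2)) * initL n) = Mmat n := by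
  ext i j
  rw [Matrix.mul_apply]
  have hterm : ∀ k : Fin n, finL n i k * (liftMat n (Mmat (n/2)) * initL n) k j
      = (if i = k then (liftMat n (Mmat (n/2)) * initL n) k j else 0)
        + (if i.val % 2 = 0 ∧ k.val + 1 = i.val then (liftMat n (Mmat (n/2)) * initL n) k j else 0) := by
    intro k
    rw [finL_apply, add_mul, ite_mul, ite_mul, one_mul, zero_mul]
  simp_rw [hterm, Finset.sum_add_distrib]
  rw [Finset.sum_ite_eq, if_pos (Finset.mem_univ i)]
  by_cases hi0 : i.val % 2 = 0 ∧ 0 < i.val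
  · obtain ⟨hie, hip⟩ := hi0
    have hlt : i.val - 1 < n := by have := i.isLt; omega
    rw [Finset.sum_eq_single (⟨i.val - 1, hlt⟩ : Fin n)]
    · rw [if_pos (show i.val % 2 = 0 ∧ ((⟨i.val-1, hlt⟩ : Fin n)).val + 1 = i.val from ⟨hie, by show i.val - 1 + 1 = i.val; omega⟩)]
      have h1 : (liftMat n (Mmat (n/2)) * initL n) i j = if i = j then 1 else 0 := by
        rw [C_apply, if_neg (by omega)]
      have h2 : (liftMat n (Mmat (n/2)) * initL n) (⟨i.val - 1, hlt⟩ : Fin n) j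
          = if j.val ≤ i.val - 1 then 1 else 0 := by
        rw [C_apply, if_pos (show (i.val - 1) % 2 = 1 by omega)]
      rw [h1, h2, Mmat]
      simp only [Matrix.of_apply]
      have hij : (j ≤ i) ↔ j.val ≤ i.val := Fin.le_def
      have hij2 : (i = j) ↔ i.val = j.val := Fin.ext_iff
      rw [if_congr hij rfl rfl, if_congr hij2 rfl rfl]
      split_ifs <;> first | (exfalso; omega) | norm_num
    · intro k _ hk
      rw [if_neg]
      rintro ⟨hk1, hk2⟩
      exact hk (Fin.ext (show k.val = i.val - 1 by omega))
    · simp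
  · rw [Finset.sum_eq_zero (fun k _ => if_neg (by
      rintro ⟨hk1, hk2⟩
      exact hi0 ⟨hk1, by omega⟩)), add_zero]
    rw [C_apply, Mmat]
    simp only [Matrix.of_apply]
    by_cases hi : i.val % 2 = 1
    · rw [if_pos hi]
      exact if_congr Fin.le_def.symm rfl rfl
    · have hiz : i.val = 0 := by omega
      rw [if_neg hi]
      have h1 : (i = j) ↔ j.val ≤ i.val := by rw [Fin.ext_iff]; omega
      have h2 : (j ≤ i) ↔ j.val ≤ i.val := Fin.le_def
      rw [if_congr h1 rfl rfl, if_congr h2 rfl rfl]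

lemma build (n : ℕ) : ∃ L : List (Matrix (Fin n) (Fin n) (ZMod 2)),
    L.length ≤ 2 * Nat.clog 2 n - 1 ∧ (∀ A ∈ L, IsParallelRowElim A) ∧
    L.reverse.prod = Mmat n := by
  induction n using Nat.strong_induction_on with
  | _ n ih =>
    rcases lt_or_ge n 2 with h2 | h2
    · refine ⟨[], by simp, by simp, ?_⟩
      simp only [List.reverse_nil, List.prod_nil]
      ext i j
      have hij : i = j := Fin.ext (by have := i.isLt; have := j.isLt; omega)
      subst hij
      rw [Mmat]
      simp [Matrix.one_apply]
    · rcases lt_or_ge n 3 with h3 | h3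
      · have hn2 : n = 2 := by omega
        subst hn2
        have hc : 0 < Nat.clog 2 2 := Nat.clog_pos one_lt_two one_lt_two
        refine ⟨[initL 2], by simpa using by omega, ?_, ?_⟩
        · intro A hA
          simp only [List.mem_singleton] at hA
          subst hA
          exact initL_parallel 2
        · simp only [List.reverse_singleton, List.prod_singleton]
          ext i j
          rw [initL_apply, Mmat]
          simp only [Matrix.of_apply]
          have h1 : (i = j) ↔ i.val = j.val := Fin.ext_iff
          have h2 : (j ≤ i) ↔ j.val ≤ i.val := Fin.le_def
          rw [if_congr h1 rfl rfl, if_congr h2 rfl rfl]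
          have hi := i.isLt
          have hj := j.isLt
          split_ifs <;> first | (exfalso; omega) | norm_num
      · obtain ⟨L, hlen, hpar, hprod⟩ := ih (n/2) (by omega)
        refine ⟨initL n :: (L.map (liftHom n) ++ [finL n]), ?_, ?_, ?_⟩
        · have hc1 : Nat.clog 2 (n/2) + 1 ≤ Nat.clog 2 n := by
            have e1 := Nat.clog_of_two_le (b := 2) (n := n) one_lt_two (by omega)
            have hm := Nat.clog_mono_right 2 (show n/2 ≤ (n + 2 - 1)/2 by omega)
            omega
          have hc2 : 2 ≤ Nat.clog 2 n := by
            by_contra h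
            have h4 : n ≤ 2 ^ 1 := (Nat.clog_le_iff_le_pow one_lt_two).1 (by omega)
            norm_num at h4
            omega
          simp only [List.length_cons, List.length_append, List.length_map,
            List.length_singleton, List.length_nil]
          omega
        · intro A hA
          simp only [List.mem_cons, List.mem_append, List.mem_map,
            List.mem_singleton] at hA
          rcases hA with rfl | ⟨B, hB, rfl⟩ | rfl | h
          · exact initL_parallel n
          · exact liftMat_parallel _ (hpar B hB)
          · exact finL_parallel n
          · exact absurd h (List.not_mem_nil (a := A))
        · have hmap : (List.map (liftHom n) L).reverse.prod = liftMat n (Mmat (n/2)) := by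
            rw [← List.map_reverse, ← MonoidHom.map_list_prod, hprod]
            rfl
          rw [List.reverse_cons, List.reverse_append, List.reverse_singleton,
            List.prod_append, List.prod_append, List.prod_singleton,
            List.prod_singleton, hmap, mul_assoc]
          exact M_eq

theorem prefix_xor_parallel (n : ℕ) (hn : 2 ≤ n) :
    ∃ d : ℕ, d < 2 * Nat.clog 2 n ∧
    ∃ R : Fin d → Matrix (Fin n) (Fin n) (ZMod 2),
      (∀ k, IsParallelRowElim (R k)) ∧
      ((List.ofFn R).reverse).prod =
        Matrix.of (fun i j : Fin n => if j ≤ i then 1 else 0) := by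
  obtain ⟨L, hlen, hpar, hprod⟩ := build n
  have hc : 0 < Nat.clog 2 n := Nat.clog_pos one_lt_two hn
  refine ⟨L.length, by omega, L.get, fun k => hpar _ (List.get_mem L k), ?_⟩
  rw [List.ofFn_get, hprod]
  rfl
end

section
/- Let N ≥ 1 and let R₁, …, R_d ∈ F₂^{N×N} be parallel row-elimination matrices, and set M = R_d ⋯ R₂R₁. Then every row of M has at most 2^d nonzero entries. Consequently, if some row of M has all N entries nonzero (for example, if M implements the parity map whose last output is x₁ ⊕ ⋯ ⊕ x_N), then d ≥ log₂ N. -/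
open Matrix

lemma step_lemma {N s : ℕ} (R A : Matrix (Fin N) (Fin N) (ZMod 2)) (hR : IsParallelRowElim R)
    (hA : ∀ i, (Finset.univ.filter fun j => A i j ≠ 0).card ≤ s) (i : Fin N) :
    (Finset.univ.filter fun j => (R * A) i j ≠ 0).card ≤ 2 * s := by
  rcases hR with h1 | ⟨t, ii, jj, hinj, hEq⟩
  · rw [h1, one_mul]
    exact (hA i).trans (by omega)
  · have hjj : Function.Injective jj := by
      intro a b hab
      have := hinj (a₁ := Sum.inr a) (a₂ := Sum.inr b) (by simpa using hab)
      simpa using this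
    have hrow : ∀ col, (R * A) i col
        = A i col + ∑ k, (if i = jj k then A (ii k) col else 0) := by
      intro col
      rw [hEq, add_mul, one_mul, Matrix.sum_mul]
      simp only [Matrix.add_apply, Matrix.sum_apply]
      congr 1
      refine Finset.sum_congr rfl (fun k _ => ?_)
      by_cases h : i = jj k
      · rw [if_pos h, h, Matrix.single_mul_apply_same, one_mul]
      · rw [if_neg h, Matrix.single_mul_apply_of_ne _ _ _ _ _ h]
    by_cases hk : ∃ k, i = jj k
    · obtain ⟨k0, hk0⟩ := hk
      have hsum : ∀ col, (R * A) i col = A i col + A (ii k0) col := by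
        intro col
        rw [hrow col, Finset.sum_eq_single k0]
        · rw [if_pos hk0]
        · intro k _ hne
          rw [if_neg (fun h => hne (hjj (hk0 ▸ h).symm))]
        · intro h; exact absurd (Finset.mem_univ k0) h
      have hsub : (Finset.univ.filter fun j => (R * A) i j ≠ 0) ⊆
          (Finset.univ.filter fun j => A i j ≠ 0) ∪
          (Finset.univ.filter fun j => A (ii k0) j ≠ 0) := by
        intro col hcol
        simp only [Finset.mem_filter, Finset.mem_union, Finset.mem_univ, true_and] at hcol ⊢
        by_contra hcon
        push_neg at hcon
        exact hcol (by rw [hsum col, hcon.1, hcon.2, add_zero])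
      calc _ ≤ _ := Finset.card_le_card hsub
        _ ≤ _ := Finset.card_union_le _ _
        _ ≤ 2 * s := by have := hA i; have := hA (ii k0); omega
    · push_neg at hk
      have hsum : ∀ col, (R * A) i col = A i col := by
        intro col
        rw [hrow col, Finset.sum_eq_zero (fun k _ => if_neg (hk k)), add_zero]
      have : (Finset.univ.filter fun j => (R * A) i j ≠ 0) =
          (Finset.univ.filter fun j => A i j ≠ 0) := by
        refine Finset.filter_congr (fun col _ => ?_)
        rw [hsum col]
      rw [this]
      exact (hA i).trans (by omega)

lemma list_lemma {N : ℕ} : ∀ (L : List (Matrix (Fin N) (Fin N) (ZMod 2))),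
    (∀ R ∈ L, IsParallelRowElim R) → ∀ i,
    (Finset.univ.filter fun j => L.prod i j ≠ 0).card ≤ 2 ^ L.length
  | [] => by
    intro _ i
    rw [List.prod_nil]
    have : (Finset.univ.filter fun j => (1 : Matrix (Fin N) (Fin N) (ZMod 2)) i j ≠ 0)
        = {i} := by
      ext j
      by_cases h : i = j <;> simp [Matrix.one_apply, h, eq_comm]
    rw [this, Finset.card_singleton]; simp
  | R :: L => by
    intro h i
    rw [List.prod_cons]
    have := step_lemma R L.prod (h R (List.mem_cons_self))
      (list_lemma L (fun R' hR' => h R' (List.mem_cons_of_mem _ hR'))) i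
    calc _ ≤ 2 * 2 ^ L.length := this
      _ = 2 ^ (R :: L).length := by rw [List.length_cons, pow_succ]; ring

theorem parallel_row_elim_row_sparsity (N : ℕ) (hN : 1 ≤ N) (d : ℕ)
    (R : Fin d → Matrix (Fin N) (Fin N) (ZMod 2))
    (hR : ∀ k, IsParallelRowElim (R k))
    (M : Matrix (Fin N) (Fin N) (ZMod 2))
    (hM : M = ((List.ofFn R).reverse).prod) :
    (∀ i : Fin N, (Finset.univ.filter (fun j : Fin N => M i j ≠ 0)).card ≤ 2 ^ d) ∧
    ((∃ i : Fin N, ∀ j : Fin N, M i j ≠ 0) → Real.logb 2 N ≤ (d : ℝ)) := by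
  have hmem : ∀ R' ∈ (List.ofFn R).reverse, IsParallelRowElim R' := by
    intro R' hR'
    rw [List.mem_reverse, List.mem_ofFn] at hR'
    obtain ⟨k, hk⟩ := hR'
    exact hk ▸ hR k
  have hmain : ∀ i : Fin N, (Finset.univ.filter (fun j : Fin N => M i j ≠ 0)).card ≤ 2 ^ d := by
    intro i
    have := list_lemma ((List.ofFn R).reverse) hmem i
    rwa [← hM, List.length_reverse, List.length_ofFn] at this
  refine ⟨hmain, fun ⟨i, hi⟩ => ?_⟩
  have hcard : N ≤ 2 ^ d := by
    have : (Finset.univ.filter (fun j : Fin N => M i j ≠ 0)) = Finset.univ := by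
      refine Finset.filter_true_of_mem (fun j _ => hi j)
    have h2 := hmain i
    rw [this, Finset.card_univ, Fintype.card_fin] at h2
    exact h2
  have h1 : (0:ℝ) < N := by exact_mod_cast hN
  rw [Real.logb_le_iff_le_rpow (by norm_num) h1]
  rw [Real.rpow_natCast]
  exact_mod_cast hcard
end

section
/- There exists a constant c > 0 such that for every ε > 0 there is n₀ with the following property: for all integers n ≥ n₀ and m ≥ 0, the number of matrices M ∈ GL(n, F₂) for which there exist a matrix E ∈ F₂^{n×m}, an invertible matrix F ∈ GL(m, F₂), a natural number d ≤ c · n² / ((n+m) · log₂(n+m)), and parallel row-elimination matrices R₁, …, R_d ∈ F₂^{(n+m)×(n+m)} with R_d ⋯ R₂R₁ = [[M, E], [0, F]], is at most ε · |GL(n, F₂)|. (In other words, for a 1 − o(1) fraction of CNOT operators, any CNOT circuit with m ancillae implementing them requires depth Ω(n²/((n+m)·log(n+m))).) -/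
open Matrix

section PE
variable {ι : Type} [DecidableEq ι] [Fintype ι]

lemma pe_struct {R : Matrix ι ι (ZMod 2)} (hR : IsParallelRowElim R) :
    (∀ j, R j j = 1) ∧
      ∀ j i i', i ≠ j → i' ≠ j → R j i = 1 → R j i' = 1 → i = i' := by
  rcases hR with rfl | ⟨t, a, b, hinj, rfl⟩
  · refine ⟨fun j => Matrix.one_apply_eq j, fun j i i' hij hi'j h1 h1' => ?_⟩
    rw [Matrix.one_apply_ne' hij] at h1
    exact absurd h1.symm one_ne_zero
  · have hab : ∀ k k' : Fin t, a k ≠ b k' := by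
      intro k k' h
      exact absurd (hinj (show Sum.elim a b (Sum.inl k) = Sum.elim a b (Sum.inr k') from h))
        (by simp)
    have hbinj : Function.Injective b := by
      intro k k' h
      have := hinj (show Sum.elim a b (Sum.inr k) = Sum.elim a b (Sum.inr k') from h)
      simpa using this
    have hentry : ∀ p q, ((1 + ∑ k : Fin t, Matrix.single (b k) (a k) 1 :
          Matrix ι ι (ZMod 2))) p q
        = (1 : Matrix ι ι (ZMod 2)) p q
          + ∑ k : Fin t, (if b k = p ∧ a k = q then (1 : ZMod 2) else 0) := by
      intro p q
      simp only [Matrix.add_apply, Matrix.sum_apply, Matrix.single, Matrix.of_apply]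
    constructor
    · intro j
      rw [hentry, Matrix.one_apply_eq, Finset.sum_eq_zero, add_zero]
      intro k _
      rw [if_neg]
      rintro ⟨hb, ha⟩
      exact hab k k (ha.trans hb.symm)
    · intro j i i' hij hi'j h1 h1'
      have hex : ∀ q, q ≠ j →
          ((1 + ∑ k : Fin t, Matrix.single (b k) (a k) 1 : Matrix ι ι (ZMod 2))) j q = 1 →
          ∃ k, b k = j ∧ a k = q := by
        intro q hq hval
        rw [hentry, Matrix.one_apply_ne' hq, zero_add] at hval
        by_contra hno
        push_neg at hno
        rw [Finset.sum_eq_zero] at hval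
        · exact absurd hval.symm one_ne_zero
        · intro k _
          rw [if_neg]
          rintro ⟨hb, ha⟩
          exact hno k hb ha
      obtain ⟨k, hbk, hak⟩ := hex i hij h1
      obtain ⟨k', hbk', hak'⟩ := hex i' hi'j h1'
      have : k = k' := hbinj (hbk.trans hbk'.symm)
      rw [← hak, this, hak']

open scoped Classical in
noncomputable def peEncode (R : Matrix ι ι (ZMod 2)) : ι → ι :=
  fun j => if h : ∃ i, i ≠ j ∧ R j i = 1 then h.choose else j

lemma peEncode_eq {R : Matrix ι ι (ZMod 2)} (hR : IsParallelRowElim R)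
    {j i : ι} (hij : i ≠ j) : R j i = 1 ↔ peEncode R j = i := by
  classical
  obtain ⟨hdiag, huniq⟩ := pe_struct hR
  constructor
  · intro h1
    have hex : ∃ i', i' ≠ j ∧ R j i' = 1 := ⟨i, hij, h1⟩
    rw [peEncode, dif_pos hex]
    exact huniq j _ i hex.choose_spec.1 hij hex.choose_spec.2 h1
  · intro hphi
    rw [peEncode] at hphi
    split at hphi
    · next h => exact hphi ▸ h.choose_spec.2
    · exact absurd hphi.symm hij

lemma peEncode_inj {R S : Matrix ι ι (ZMod 2)} (hR : IsParallelRowElim R)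
    (hS : IsParallelRowElim S) (h : peEncode R = peEncode S) : R = S := by
  ext j i
  by_cases hij : i = j
  · subst hij
    rw [(pe_struct hR).1, (pe_struct hS).1]
  · have h01 : ∀ a : ZMod 2, a = 0 ∨ a = 1 := by decide
    rcases h01 (R j i) with hr | hr <;> rcases h01 (S j i) with hs | hs <;>
        rw [hr, hs]
    · exfalso
      have := (peEncode_eq hR hij).mpr (h.symm ▸ (peEncode_eq hS hij).mp hs)
      rw [hr] at this; exact absurd this one_ne_zero.symm
    · exfalso
      have := (peEncode_eq hS hij).mpr (h ▸ (peEncode_eq hR hij).mp hr)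
      rw [hs] at this; exact absurd this one_ne_zero.symm
end PE

lemma ofFn_pad_prod {M : Type*} [Monoid M] {d D : ℕ} (h : d ≤ D) (R : Fin d → M) :
    (List.ofFn (fun k : Fin D => if h' : (k : ℕ) < d then R ⟨k, h'⟩ else 1)).reverse.prod
      = (List.ofFn R).reverse.prod := by
  have heq : List.ofFn (fun k : Fin D => if h' : (k : ℕ) < d then R ⟨k, h'⟩ else 1)
      = List.ofFn R ++ List.replicate (D - d) 1 := by
    apply List.ext_getElem
    · simp [Nat.add_sub_cancel' h]
    · intro k h1 h2
      simp only [List.getElem_ofFn, List.getElem_append, List.getElem_replicate,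
        List.length_ofFn]
  rw [heq, List.reverse_append, List.prod_append, List.reverse_replicate,
    List.prod_replicate, one_pow, one_mul]

lemma gl_card_lb (n : ℕ) :
    2 ^ (∑ j : Fin n, (j : ℕ)) ≤
      Nat.card {M : Matrix (Fin n) (Fin n) (ZMod 2) // IsUnit M} := by
  classical
  set f : (∀ j : Fin n, Fin (j : ℕ) → ZMod 2) → {M : Matrix (Fin n) (Fin n) (ZMod 2) // IsUnit M} :=
    fun g => ⟨Matrix.of fun i j =>
      if h : (i : ℕ) < (j : ℕ) then g j ⟨i, h⟩ else if i = j then 1 else 0, by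
        rw [Matrix.isUnit_iff_isUnit_det]
        have htri : Matrix.BlockTriangular
            (Matrix.of fun i j : Fin n =>
              if h : (i : ℕ) < (j : ℕ) then g j ⟨i, h⟩ else if i = j then 1 else 0) id := by
          intro i j hji
          simp only [Matrix.of_apply, id] at hji ⊢
          rw [dif_neg (by omega), if_neg (by intro h; subst h; exact absurd hji (lt_irrefl _))]
        rw [Matrix.det_of_upperTriangular htri]
        have : ∀ i : Fin n, (Matrix.of fun i j : Fin n =>
            if h : (i : ℕ) < (j : ℕ) then g j ⟨i, h⟩ else if i = j then 1 else 0) i i = 1 := by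
          intro i
          simp
        rw [Finset.prod_congr rfl (fun i _ => this i), Finset.prod_const_one]
        exact isUnit_one⟩ with hf
  have hinj : Function.Injective f := by
    intro g g' hgg
    funext j k
    have := congrArg (fun x => x.1 ⟨(k : ℕ), k.2.trans j.2⟩ j) hgg
    simp only [hf, Matrix.of_apply] at this
    rw [dif_pos (show ((⟨(k : ℕ), k.2.trans j.2⟩ : Fin n) : ℕ) < (j : ℕ) from k.2),
      dif_pos k.2] at this
    simpa using this
  calc 2 ^ (∑ j : Fin n, (j : ℕ))
      = Nat.card (∀ j : Fin n, Fin (j : ℕ) → ZMod 2) := by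
        rw [Nat.card_eq_fintype_card, Fintype.card_pi]
        rw [← Finset.prod_pow_eq_pow_sum]
        exact (Finset.prod_congr rfl (fun j _ => by simp [Fintype.card_fun])).symm
    _ ≤ _ := Nat.card_le_card_of_injective f hinj

theorem cnot_depth_lower_bound_counting :
    ∃ c : ℝ, 0 < c ∧ ∀ ε : ℝ, 0 < ε → ∃ n₀ : ℕ, ∀ n : ℕ, n₀ ≤ n → ∀ m : ℕ,
    (Nat.card {M : Matrix (Fin n) (Fin n) (ZMod 2) //
        IsUnit M ∧
        ∃ (E : Matrix (Fin n) (Fin m) (ZMod 2))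
          (F : Matrix (Fin m) (Fin m) (ZMod 2)),
          IsUnit F ∧
          ∃ d : ℕ, (d : ℝ) ≤ c * (n : ℝ) ^ 2 /
              (((n : ℝ) + (m : ℝ)) * Real.logb 2 ((n : ℝ) + (m : ℝ))) ∧
          ∃ R : Fin d → Matrix (Fin n ⊕ Fin m) (Fin n ⊕ Fin m) (ZMod 2),
            (∀ k, IsParallelRowElim (R k)) ∧
            ((List.ofFn R).reverse).prod = Matrix.fromBlocks M E 0 F} : ℝ)
      ≤ ε * (Nat.card {M : Matrix (Fin n) (Fin n) (ZMod 2) // IsUnit M} : ℝ) := by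
  classical
  refine ⟨1/8, by norm_num, ?_⟩
  intro ε hε
  obtain ⟨k, hk⟩ := exists_pow_lt_of_lt_one hε (by norm_num : (1/2 : ℝ) < 1)
  refine ⟨max k 4, ?_⟩
  intro n hn m
  have hn4 : 4 ≤ n := le_trans (le_max_right _ _) hn
  have hnk : k ≤ n := le_trans (le_max_left _ _) hn
  set N : ℕ := n + m with hN
  have hNcast : (n : ℝ) + (m : ℝ) = (N : ℝ) := by push_cast [hN]; ring
  have hNn : 4 ≤ N := by omega
  have hNpos : (0 : ℝ) < (N : ℝ) := by exact_mod_cast Nat.lt_of_lt_of_le (by norm_num) hNn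
  have hlogb : 1 ≤ Real.logb 2 (N : ℝ) := by
    rw [← Real.logb_self_eq_one (by norm_num : (1:ℝ) < 2)]
    exact Real.logb_le_logb_of_le (by norm_num) (by norm_num)
      (by exact_mod_cast le_trans (by norm_num) hNn)
  have hden : (0 : ℝ) < (N : ℝ) * Real.logb 2 (N : ℝ) :=
    mul_pos hNpos (lt_of_lt_of_le one_pos hlogb)
  set B : ℝ := 1/8 * (n : ℝ) ^ 2 /
      (((n : ℝ) + (m : ℝ)) * Real.logb 2 ((n : ℝ) + (m : ℝ))) with hB
  have hBnn : 0 ≤ B := by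
    rw [hB, hNcast]
    positivity
  set D : ℕ := ⌊B⌋₊ with hD
  set ι := (Fin n ⊕ Fin m)
  set T := {M : Matrix (Fin n) (Fin n) (ZMod 2) //
        IsUnit M ∧
        ∃ (E : Matrix (Fin n) (Fin m) (ZMod 2))
          (F : Matrix (Fin m) (Fin m) (ZMod 2)),
          IsUnit F ∧
          ∃ d : ℕ, (d : ℝ) ≤ 1/8 * (n : ℝ) ^ 2 /
              (((n : ℝ) + (m : ℝ)) * Real.logb 2 ((n : ℝ) + (m : ℝ))) ∧
          ∃ R : Fin d → Matrix ι ι (ZMod 2),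
            (∀ k, IsParallelRowElim (R k)) ∧
            ((List.ofFn R).reverse).prod = Matrix.fromBlocks M E 0 F} with hT
  have key : ∀ x : T, ∃ R : Fin D → Matrix ι ι (ZMod 2),
      (∀ k, IsParallelRowElim (R k)) ∧
      ∀ i j, (List.ofFn R).reverse.prod (Sum.inl i) (Sum.inl j) = x.1 i j := by
    rintro ⟨M, hM, E, F, hF, d, hd, R, hPE, hprod⟩
    have hdD : d ≤ D := Nat.le_floor (by rw [hB]; exact hd)
    refine ⟨fun q => if h' : (q : ℕ) < d then R ⟨q, h'⟩ else 1, fun q => ?_, fun i j => ?_⟩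
    · dsimp only
      split
      · exact hPE _
      · exact Or.inl rfl
    · show (List.ofFn (fun q : Fin D => if h' : (q : ℕ) < d then R ⟨q, h'⟩ else 1)).reverse.prod
          (Sum.inl i) (Sum.inl j) = M i j
      rw [ofFn_pad_prod hdD, hprod, Matrix.fromBlocks_apply₁₁]
  set f : T → (Fin D → ι → ι) := fun x => fun q => peEncode ((key x).choose q) with hfdef
  have hfinj : Function.Injective f := by
    intro x y hxy
    have hRx := (key x).choose_spec
    have hRy := (key y).choose_spec
    have hRR : (key x).choose = (key y).choose :=
      funext fun q => peEncode_inj (hRx.1 q) (hRy.1 q) (congrFun hxy q)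
    apply Subtype.ext
    ext i j
    rw [← hRx.2 i j, hRR, hRy.2 i j]
  have hcardT : Nat.card T ≤ ((N ^ N) ^ D : ℕ) := by
    refine le_trans (Nat.card_le_card_of_injective f hfinj) ?_
    simp [Nat.card_eq_fintype_card, Fintype.card_fun, ι, hN]
  -- real arithmetic
  have hDB : (D : ℝ) ≤ B := Nat.floor_le hBnn
  have hexp : Real.logb 2 (N : ℝ) * ((N * D : ℕ) : ℝ) ≤ 1/8 * (n : ℝ) ^ 2 := by
    have h1 : Real.logb 2 (N : ℝ) * ((N * D : ℕ) : ℝ)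
        = (D : ℝ) * ((N : ℝ) * Real.logb 2 (N : ℝ)) := by push_cast; ring
    rw [h1]
    calc (D : ℝ) * ((N : ℝ) * Real.logb 2 (N : ℝ))
        ≤ B * ((N : ℝ) * Real.logb 2 (N : ℝ)) :=
          mul_le_mul_of_nonneg_right hDB (le_of_lt hden)
      _ = 1/8 * (n : ℝ) ^ 2 := by
          rw [hB, hNcast]
          exact div_mul_cancel₀ _ (ne_of_gt hden)
  have hpow : (((N ^ N) ^ D : ℕ) : ℝ) ≤ (2 : ℝ) ^ (1/8 * (n : ℝ) ^ 2) := by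
    push_cast
    rw [← pow_mul, ← Real.rpow_natCast (N : ℝ) (N * D),
      ← Real.rpow_logb (b := 2) (by norm_num) (by norm_num) hNpos (x := (N : ℝ)),
      ← Real.rpow_mul (by norm_num : (0:ℝ) ≤ 2)]
    exact Real.rpow_le_rpow_of_exponent_le (by norm_num) hexp
  -- GL lower bound
  set S : ℕ := ∑ j : Fin n, (j : ℕ) with hS
  have hS2 : (S : ℝ) * 2 = (n : ℝ) * ((n : ℝ) - 1) := by
    have h := Finset.sum_range_id_mul_two n
    have hSr : S = ∑ i ∈ Finset.range n, i := by
      rw [hS]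
      exact Fin.sum_univ_eq_sum_range (fun i => (i : ℕ)) n
    have h2 : (((∑ i ∈ Finset.range n, i) * 2 : ℕ) : ℝ) = ((n * (n - 1) : ℕ) : ℝ) :=
      Nat.cast_inj.mpr h
    rw [hSr]
    push_cast [Nat.cast_sub (by omega : 1 ≤ n)] at h2 ⊢
    linarith [h2]
  have hGL : ((2 ^ S : ℕ) : ℝ) ≤
      (Nat.card {M : Matrix (Fin n) (Fin n) (ZMod 2) // IsUnit M} : ℝ) :=
    Nat.cast_le.mpr (gl_card_lb n)
  have hnR : (4 : ℝ) ≤ (n : ℝ) := by exact_mod_cast hn4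
  have hexp2 : 1/8 * (n : ℝ) ^ 2 + (n : ℝ) ≤ (S : ℝ) := by nlinarith [hS2, hnR]
  have hhalf : ((1:ℝ)/2) ^ n < ε :=
    lt_of_le_of_lt (pow_le_pow_of_le_one (by norm_num) (by norm_num) hnk) hk
  have hmain : (2 : ℝ) ^ (1/8 * (n : ℝ) ^ 2) ≤ ε * ((2 ^ S : ℕ) : ℝ) := by
    have h2S : ((2 ^ S : ℕ) : ℝ) = (2 : ℝ) ^ ((S : ℕ) : ℝ) := by
      rw [Real.rpow_natCast]; push_cast; ring
    have hstep : (2 : ℝ) ^ (1/8 * (n : ℝ) ^ 2) ≤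
        (2 : ℝ) ^ (((S : ℕ) : ℝ) - (n : ℝ)) :=
      Real.rpow_le_rpow_of_exponent_le (by norm_num) (by linarith)
    have hsplit : (2 : ℝ) ^ (((S : ℕ) : ℝ) - (n : ℝ))
        = ((1:ℝ)/2) ^ n * (2 : ℝ) ^ ((S : ℕ) : ℝ) := by
      rw [Real.rpow_sub (by norm_num), Real.rpow_natCast (2:ℝ) n]
      rw [div_pow, one_pow]
      ring
    rw [h2S]
    calc (2 : ℝ) ^ (1/8 * (n : ℝ) ^ 2)
        ≤ ((1:ℝ)/2) ^ n * (2 : ℝ) ^ ((S : ℕ) : ℝ) := by rw [← hsplit]; exact hstep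
      _ ≤ ε * (2 : ℝ) ^ ((S : ℕ) : ℝ) :=
          mul_le_mul_of_nonneg_right (le_of_lt hhalf) (Real.rpow_nonneg (by norm_num) _)
  calc (Nat.card T : ℝ)
      ≤ (((N ^ N) ^ D : ℕ) : ℝ) := Nat.cast_le.mpr hcardT
    _ ≤ (2 : ℝ) ^ (1/8 * (n : ℝ) ^ 2) := hpow
    _ ≤ ε * ((2 ^ S : ℕ) : ℝ) := hmain
    _ ≤ ε * (Nat.card {M : Matrix (Fin n) (Fin n) (ZMod 2) // IsUnit M} : ℝ) :=
        mul_le_mul_of_nonneg_left hGL (le_of_lt hε)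
end
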